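/- arXiv:2304.05790 — 3 statements merged into one kernel-verified Lean document; each statement's English description precedes it below -/
import Mathlib

section
/- Lemma 3.8 (approximation of the extended product function on [−1,1]^d): There exists a constant K ∈ ℕ which satisfies for all d ∈ ℕ, p ∈ [1,∞], ε ∈ (0,1] that Cost_p(𝔭_d|_{[−1,1]^d}, √32·d^{7/2}, ε) ≤ K·d^K·ε^{−1}. -/
open scoped BigOperators ENNReal

noncomputable section

/-- A ReLU deep neural network with `L + 1` affine layers (so depth at least one),
layer dimensions `ℓ 0, ℓ 1, …, ℓ (L + 1)`, weight matrices `W k` and bias vectors `b k`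
(values of `ℓ`, `W`, `b` beyond layer index `L` are irrelevant for the realization
and for the number of parameters). -/
structure DNN where
  L : ℕ
  ℓ : ℕ → ℕ
  W : (k : ℕ) → Matrix (Fin (ℓ (k + 1))) (Fin (ℓ k)) ℝ
  b : (k : ℕ) → Fin (ℓ (k + 1)) → ℝ

namespace DNN

/-- The number of parameters `P(Φ) = ∑_{k=1}^{L} ℓ_k (ℓ_{k-1} + 1)` of a DNN. -/
def params (Φ : DNN) : ℕ :=
  ∑ k ∈ Finset.range (Φ.L + 1), Φ.ℓ (k + 1) * (Φ.ℓ k + 1)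

/-- The `k`-th affine layer function `x ↦ W_k x + b_k`. -/
def affine (Φ : DNN) (k : ℕ) (x : Fin (Φ.ℓ k) → ℝ) : Fin (Φ.ℓ (k + 1)) → ℝ :=
  fun i => (∑ j, Φ.W k i j * x j) + Φ.b k i

/-- The value after `k` affine layers, each followed by the ReLU activation. -/
def hidden (Φ : DNN) : (k : ℕ) → (Fin (Φ.ℓ 0) → ℝ) → (Fin (Φ.ℓ k) → ℝ)
  | 0 => id
  | k + 1 => fun x i => max (affine Φ k (hidden Φ k x) i) 0

/-- The realization `R(Φ)`: all affine layers with ReLU in between (no activation after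
the last affine layer). -/
def realize (Φ : DNN) (x : Fin (Φ.ℓ 0) → ℝ) : Fin (Φ.ℓ (Φ.L + 1)) → ℝ :=
  affine Φ Φ.L (hidden Φ Φ.L x)

/-- `Φ.Realizes f` means that the realization of `Φ` is the function `f : ℝ^m → ℝ^n`
(in particular the input and output dimensions of `Φ` are `m` and `n`). -/
def Realizes (Φ : DNN) {m n : ℕ} (f : (Fin m → ℝ) → (Fin n → ℝ)) : Prop :=
  ∃ (hm : Φ.ℓ 0 = m) (hn : Φ.ℓ (Φ.L + 1) = n),
    ∀ (x : Fin m → ℝ) (i : Fin n),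
      f x i = realize Φ (fun j => x (Fin.cast hm j)) (Fin.cast hn.symm i)

end DNN

/-- The `ℓ^p`-norm on `ℝ^k` for `p ∈ [1,∞]`. -/
def lpNorm (p : ℝ≥0∞) {k : ℕ} (x : Fin k → ℝ) : ℝ :=
  if p = ∞ then ⨆ i, |x i| else (∑ i, |x i| ^ p.toReal) ^ (1 / p.toReal)

/-- The hypercube `[a,b]^d ⊆ ℝ^d`. -/
def cube (d : ℕ) (a b : ℝ) : Set (Fin d → ℝ) :=
  Set.Icc (fun _ => a) (fun _ => b)

/-- `Cost p D f L ε`: the minimal number of parameters of a DNN whose realization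
approximates `f` on `D` up to `ε` in the `ℓ^p`-norm and is `L`-Lipschitz on `D`
with respect to the `ℓ^p`-norm; `∞` if no such DNN exists. -/
def Cost (p : ℝ≥0∞) {m n : ℕ} (D : Set (Fin m → ℝ))
    (f : (Fin m → ℝ) → (Fin n → ℝ)) (L ε : ℝ) : ℝ≥0∞ :=
  sInf { N : ℝ≥0∞ | ∃ Φ : DNN, ∃ g : (Fin m → ℝ) → (Fin n → ℝ),
    Φ.Realizes g ∧ N = (Φ.params : ℝ≥0∞) ∧
    (∀ x ∈ D, lpNorm p (g x - f x) ≤ ε) ∧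
    (∀ x ∈ D, ∀ y ∈ D, lpNorm p (g x - g y) ≤ L * lpNorm p (x - y)) }

/-- Given block sizes `d : Fin n → ℕ`, the index in `Fin (∑ j, d j)` of the `l`-th
coordinate of the `i`-th block (blocks are arranged consecutively). -/
def blockIdx {n : ℕ} (d : Fin n → ℕ) (i : Fin n) (l : Fin (d i)) : Fin (∑ j, d j) :=
  ⟨(∑ j ∈ Finset.univ.filter (fun j => j < i), d j) + l.1, by
    have h1 : l.1 < d i := l.2
    have h2 : (∑ j ∈ Finset.univ.filter (fun j => j < i), d j) + d i ≤ ∑ j, d j := by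
      have hsplit := Finset.sum_filter_add_sum_filter_not Finset.univ (fun j => j < i) d
      have h3 : d i ≤ ∑ j ∈ Finset.univ.filter (fun j => ¬ j < i), d j :=
        Finset.single_le_sum (fun _ _ => Nat.zero_le _) (by simp)
      omega
    omega⟩

/-- The class `𝒫_{k,p}([a,b]^d, L)`: parallelizations `f = f_1 □ ⋯ □ f_m` of real-valued
functions `f_i` of at most `k` variables that are `L`-Lipschitz w.r.t. the `ℓ^p`-norm. -/
def MemPLip (k : ℕ) (p : ℝ≥0∞) (a b L : ℝ) {d m : ℕ}
    (f : (Fin d → ℝ) → (Fin m → ℝ)) : Prop :=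
  ∃ (dims : Fin m → ℕ) (hd : ∑ i, dims i = d) (g : ∀ i, (Fin (dims i) → ℝ) → ℝ),
    (∀ i, 0 < dims i) ∧ (∀ i, dims i ≤ k) ∧
    (∀ i, ∀ x ∈ cube (dims i) a b, ∀ y ∈ cube (dims i) a b,
      |g i x - g i y| ≤ L * lpNorm p (x - y)) ∧
    (∀ x ∈ cube d a b, ∀ i : Fin m,
      f x i = g i (fun l => x (Fin.cast hd (blockIdx dims i l))))

/-- The class `M([a,b]^d)`: parallelizations of maximum functions `m_{d_1} □ ⋯ □ m_{d_m}`. -/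
def MemMaxClass (a b : ℝ) {d m : ℕ} (f : (Fin d → ℝ) → (Fin m → ℝ)) : Prop :=
  ∃ (dims : Fin m → ℕ) (hd : ∑ i, dims i = d),
    (∀ i, 0 < dims i) ∧
    (∀ x ∈ cube d a b, ∀ i : Fin m,
      f x i = ⨆ l : Fin (dims i), x (Fin.cast hd (blockIdx dims i l)))

/-- The class `P([a,b]^d)`: parallelizations of product functions `p_{d_1} □ ⋯ □ p_{d_m}`. -/
def MemProdClass (a b : ℝ) {d m : ℕ} (f : (Fin d → ℝ) → (Fin m → ℝ)) : Prop :=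
  ∃ (dims : Fin m → ℕ) (hd : ∑ i, dims i = d),
    (∀ i, 0 < dims i) ∧
    (∀ x ∈ cube d a b, ∀ i : Fin m,
      f x i = ∏ l : Fin (dims i), x (Fin.cast hd (blockIdx dims i l)))

/-- `f` coincides on `[a,b]^d` with the extended maximum function
`𝔪_d(x) = (max{x_1}, max{x_1,x_2}, …, max{x_1,…,x_d})`. -/
def IsExtMaxOn (a b : ℝ) {d m : ℕ} (f : (Fin d → ℝ) → (Fin m → ℝ)) : Prop :=
  ∃ h : d = m, ∀ x ∈ cube d a b, ∀ i : Fin m,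
    f x i = (Finset.Iic (Fin.cast h.symm i)).sup' Finset.nonempty_Iic x

/-- `f` coincides on `[a,b]^d` with the extended product function
`𝔭_d(x) = (x_1, x_1 x_2, …, x_1 ⋯ x_d)`. -/
def IsExtProdOn (a b : ℝ) {d m : ℕ} (f : (Fin d → ℝ) → (Fin m → ℝ)) : Prop :=
  ∃ h : d = m, ∀ x ∈ cube d a b, ∀ i : Fin m,
    f x i = ∏ j ∈ Finset.Iic (Fin.cast h.symm i), x j

/-- Iterated composition: `compSeq dims f k = f_{k-1} ∘ ⋯ ∘ f_1 ∘ f_0`. -/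
def compSeq (dims : ℕ → ℕ) (f : ∀ i : ℕ, (Fin (dims i) → ℝ) → (Fin (dims (i + 1)) → ℝ)) :
    (k : ℕ) → (Fin (dims 0) → ℝ) → (Fin (dims k) → ℝ)
  | 0 => id
  | k + 1 => fun x => f k (compSeq dims f k x)


namespace LemmaAux

/-! ### ReLU basics -/

def relu (x : ℝ) : ℝ := max x 0

lemma relu_of_nonneg {x : ℝ} (h : 0 ≤ x) : relu x = x := max_eq_left h
lemma relu_of_nonpos {x : ℝ} (h : x ≤ 0) : relu x = 0 := max_eq_right h
lemma relu_sub_relu_neg (x : ℝ) : relu x - relu (-x) = x := by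
  rcases le_total x 0 with h|h
  · rw [relu_of_nonpos h, relu_of_nonneg (by linarith)]; ring
  · rw [relu_of_nonneg h, relu_of_nonpos (by linarith)]; ring

lemma relu_abs (a : ℝ) {c : ℝ} (hc : 0 ≤ c) :
    relu (a - c) + relu (-a - c) = relu (|a| - c) := by
  rcases le_total a 0 with h|h
  · rw [abs_of_nonpos h, relu_of_nonpos (by linarith)]; ring_nf
  · rw [abs_of_nonneg h, relu_of_nonpos (show -a - c ≤ 0 by linarith)]; ring_nf

/-! ### The piecewise-linear approximation of the square function -/

/-- coefficients of the PWL interpolation of `t ↦ t²` with step `h` -/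
def cc (h : ℝ) (k : ℕ) : ℝ := if k = 0 then h else 2*h

/-- PWL interpolation of `t ↦ t²` on `[0, m·h]` -/
def sfun (m : ℕ) (h : ℝ) (t : ℝ) : ℝ := ∑ k ∈ Finset.range m, cc h k * relu (t - k*h)

def efun (m : ℕ) (h : ℝ) (t : ℝ) : ℝ := sfun m h t - t^2

lemma sum_range_add_one (j : ℕ) : ∑ k ∈ Finset.range j, ((k:ℝ)+1) = j*(j+1)/2 := by
  induction j with
  | zero => simp
  | succ n ih => rw [Finset.sum_range_succ, ih]; push_cast; ring

lemma sfun_piece {m : ℕ} {h : ℝ} (hh : 0 < h) {j : ℕ} (hj : j < m) {t : ℝ}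
    (h1 : (j:ℝ)*h ≤ t) (h2 : t ≤ ((j:ℝ)+1)*h) :
    sfun m h t = (2*j+1)*h*t - j*(j+1)*h^2 := by
  have e1 : sfun m h t = ∑ k ∈ Finset.range (j+1), cc h k * (t - k*h) := by
    rw [sfun]
    rw [← Finset.sum_subset (Finset.range_subset_range.2 (by omega) :
        Finset.range (j+1) ⊆ Finset.range m)]
    · apply Finset.sum_congr rfl
      intro k hk
      have hk' : k ≤ j := by simpa [Nat.lt_succ_iff] using hk
      have : (k:ℝ)*h ≤ t := le_trans (by
        have : (k:ℝ) ≤ j := by exact_mod_cast hk'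
        nlinarith) h1
      rw [relu_of_nonneg (by linarith)]
    · intro k hk hk'
      have hkj : j + 1 ≤ k := by simpa [Finset.mem_range, Nat.lt_succ_iff] using hk'
      have : t ≤ (k:ℝ)*h := le_trans h2 (by
        have : ((j:ℝ)+1) ≤ k := by exact_mod_cast hkj
        nlinarith)
      rw [relu_of_nonpos (by linarith), mul_zero]
  rw [e1, Finset.sum_range_succ']
  simp only [cc]
  have e2 : ∑ k ∈ Finset.range j, (if k+1 = 0 then h else 2*h) * (t - (↑(k+1))*h)
      = 2*h*(j*t) - 2*h^2*(j*(j+1)/2) := by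
    have : ∀ k ∈ Finset.range j, (if k+1 = 0 then h else 2*h) * (t - (↑(k+1))*h)
        = 2*h*t - 2*h^2*((k:ℝ)+1) := by
      intro k _; simp; push_cast; ring
    rw [Finset.sum_congr rfl this, Finset.sum_sub_distrib]
    rw [Finset.sum_const, ← Finset.mul_sum, sum_range_add_one]
    simp [Finset.card_range]; ring
  rw [e2]; simp; ring

lemma efun_piece_lip {m : ℕ} {h : ℝ} (hh : 0 < h) {j : ℕ} (hj : j < m) {t t' : ℝ}
    (ht1 : (j:ℝ)*h ≤ t) (ht2 : t ≤ ((j:ℝ)+1)*h)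
    (ht1' : (j:ℝ)*h ≤ t') (ht2' : t' ≤ ((j:ℝ)+1)*h) :
    |efun m h t - efun m h t'| ≤ h * |t - t'| := by
  have e : efun m h t - efun m h t' = (t - t') * ((2*j+1)*h - (t + t')) := by
    unfold efun
    rw [sfun_piece hh hj ht1 ht2, sfun_piece hh hj ht1' ht2']; ring
  rw [e, abs_mul, mul_comm]
  apply mul_le_mul_of_nonneg_right _ (abs_nonneg _)
  rw [abs_le]; constructor <;> nlinarith

lemma efun_lip_aux {m : ℕ} {h : ℝ} (hh : 0 < h) :
    ∀ n : ℕ, ∀ t t' : ℝ, 0 ≤ t' → t' ≤ t → t ≤ (n:ℝ)*h → t ≤ (m:ℝ)*h →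
      |efun m h t - efun m h t'| ≤ h * (t - t') := by
  intro n
  induction n with
  | zero =>
    intro t t' h0 h1 h2 _
    have : t = t' := by simp at h2; nlinarith
    simp [this]
  | succ n ih =>
    intro t t' h0 h1 h2 hm
    by_cases hc : t ≤ (n:ℝ)*h
    · exact ih t t' h0 h1 hc hm
    push_neg at hc
    have hnm : n < m := by
      by_contra hcon
      push_neg at hcon
      have : (m:ℝ) ≤ n := by exact_mod_cast hcon
      nlinarith
    have hmain : ∀ s, (n:ℝ)*h ≤ s → s ≤ t → |efun m h t - efun m h s| ≤ h * (t - s) := by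
      intro s hs1 hs2
      have := efun_piece_lip hh hnm (le_trans hs1 hs2) (by push_cast at h2 ⊢; linarith)
        hs1 (by push_cast at h2 ⊢; linarith)
      calc |efun m h t - efun m h s| ≤ h * |t - s| := this
        _ = h * (t - s) := by rw [abs_of_nonneg (by linarith)]
    by_cases hc' : (n:ℝ)*h ≤ t'
    · exact hmain t' hc' h1
    push_neg at hc'
    have hnn : (0:ℝ) ≤ (n:ℝ)*h := by positivity
    calc |efun m h t - efun m h t'|
        ≤ |efun m h t - efun m h ((n:ℝ)*h)| + |efun m h ((n:ℝ)*h) - efun m h t'| := by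
          have := abs_sub_abs_le_abs_sub (efun m h t) (efun m h t')
          exact abs_sub_le _ _ _
      _ ≤ h * (t - (n:ℝ)*h) + h * ((n:ℝ)*h - t') := by
          gcongr
          · exact hmain ((n:ℝ)*h) le_rfl (le_of_lt hc)
          · exact ih ((n:ℝ)*h) t' h0 (le_of_lt hc') le_rfl (by nlinarith)
      _ = h * (t - t') := by ring
  
lemma efun_lip {m : ℕ} {h : ℝ} (hh : 0 < h) {t t' : ℝ}
    (h0 : 0 ≤ t') (h1 : t' ≤ t) (h2 : t ≤ (m:ℝ)*h) :
    |efun m h t - efun m h t'| ≤ h * (t - t') :=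
  efun_lip_aux hh m t t' h0 h1 h2 h2

lemma efun_zero (m : ℕ) {h : ℝ} (hh : 0 < h) : efun m h 0 = 0 := by
  unfold efun sfun
  have : ∀ k ∈ Finset.range m, cc h k * relu (0 - (k:ℝ)*h) = 0 := by
    intro k _
    have : (0:ℝ) - (k:ℝ)*h ≤ 0 := by
      have : (0:ℝ) ≤ (k:ℝ)*h := by positivity
      linarith
    rw [relu_of_nonpos this, mul_zero]
  rw [Finset.sum_congr rfl this]; simp

lemma efun_bound {m : ℕ} {h : ℝ} (hh : 0 < h) {t : ℝ}
    (h0 : 0 ≤ t) (h2 : t ≤ (m:ℝ)*h) : |efun m h t| ≤ h * t := by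
  have := efun_lip hh le_rfl h0 h2
  rw [efun_zero m hh] at this
  simpa using this

/-- abs-Lipschitz version on arbitrary pairs in `[0, mh]` -/
lemma efun_lip' {m : ℕ} {h : ℝ} (hh : 0 < h) {t t' : ℝ}
    (h0 : 0 ≤ t) (h0' : 0 ≤ t') (h2 : t ≤ (m:ℝ)*h) (h2' : t' ≤ (m:ℝ)*h) :
    |efun m h t - efun m h t'| ≤ h * |t - t'| := by
  rcases le_total t' t with hle|hle
  · rw [abs_of_nonneg (sub_nonneg.2 hle)]; exact efun_lip hh h0' hle h2
  · rw [abs_sub_comm, abs_sub_comm t t', abs_of_nonneg (sub_nonneg.2 hle)]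
    exact efun_lip hh h0 hle h2'


/-! ### Approximate multiplication -/

def gmul (m : ℕ) (h : ℝ) (a b : ℝ) : ℝ := (sfun m h (|a+b|) - sfun m h (|a-b|)) / 4

lemma gmul_sub (m : ℕ) (h : ℝ) (a b : ℝ) :
    gmul m h a b - a*b = (efun m h (|a+b|) - efun m h (|a-b|)) / 4 := by
  unfold gmul efun
  rw [sq_abs, sq_abs]; ring

lemma gmul_err {m : ℕ} {h : ℝ} (hh : 0 < h) (h3 : (m:ℝ)*h = 3)
    {a b : ℝ} (ha : |a| ≤ 2) (hb : |b| ≤ 1) :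
    |gmul m h a b - a*b| ≤ 2*h := by
  have hab : |a+b| ≤ 3 := by
    calc |a+b| ≤ |a| + |b| := abs_add_le _ _
      _ ≤ 3 := by linarith
  have hab' : |a-b| ≤ 3 := by
    calc |a-b| ≤ |a| + |b| := abs_sub _ _
      _ ≤ 3 := by linarith
  rw [gmul_sub]
  have e1 := efun_bound hh (abs_nonneg (a+b)) (by rw [h3]; exact hab)
  have e2 := efun_bound hh (abs_nonneg (a-b)) (by rw [h3]; exact hab')
  have : |efun m h (|a+b|) - efun m h (|a-b|)| ≤ h*|a+b| + h*|a-b| := by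
    calc |efun m h (|a+b|) - efun m h (|a-b|)| ≤ |efun m h (|a+b|)| + |efun m h (|a-b|)| := abs_sub _ _
      _ ≤ h*|a+b| + h*|a-b| := by gcongr
  rw [abs_div]
  have h4 : |(4:ℝ)| = 4 := by norm_num
  rw [h4]
  nlinarith [this]

lemma gmul_lip {m : ℕ} {h : ℝ} (hh : 0 < h) (h3 : (m:ℝ)*h = 3)
    {a b a' b' : ℝ} (ha : |a| ≤ 2) (hb : |b| ≤ 1) (ha' : |a'| ≤ 2) (hb' : |b'| ≤ 1) :
    |gmul m h a b - gmul m h a' b'| ≤ |a*b - a'*b'| + (h/2) * (|a-a'| + |b-b'|) := by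
  have key : gmul m h a b - gmul m h a' b'
      = (a*b - a'*b') + (efun m h (|a+b|) - efun m h (|a'+b'|))/4
        - (efun m h (|a-b|) - efun m h (|a'-b'|))/4 := by
    have e1 := gmul_sub m h a b
    have e2 := gmul_sub m h a' b'
    linarith [e1, e2]
  have bnd : ∀ u v : ℝ, |u| ≤ 3 → |v| ≤ 3 → |efun m h (|u|) - efun m h (|v|)| ≤ h * |u - v| := by
    intro u v hu hv
    calc |efun m h (|u|) - efun m h (|v|)|
        ≤ h * |abs u - abs v| := efun_lip' hh (abs_nonneg u) (abs_nonneg v)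
          (by rw [h3]; exact hu) (by rw [h3]; exact hv)
      _ ≤ h * |u - v| := mul_le_mul_of_nonneg_left (abs_abs_sub_abs_le_abs_sub u v) (le_of_lt hh)
  have h1 : |a+b| ≤ 3 := by have := abs_add_le a b; linarith
  have h2 : |a'+b'| ≤ 3 := by have := abs_add_le a' b'; linarith
  have h1' : |a-b| ≤ 3 := by have := abs_sub a b; linarith
  have h2' : |a'-b'| ≤ 3 := by have := abs_sub a' b'; linarith
  have b1 := bnd (a+b) (a'+b') h1 h2
  have b2 := bnd (a-b) (a'-b') h1' h2'
  have c1 : |(a+b) - (a'+b')| ≤ |a-a'| + |b-b'| := by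
    have : (a+b) - (a'+b') = (a-a') + (b-b') := by ring
    rw [this]; exact abs_add_le _ _
  have c2 : |(a-b) - (a'-b')| ≤ |a-a'| + |b-b'| := by
    have : (a-b) - (a'-b') = (a-a') - (b-b') := by ring
    rw [this]; exact abs_sub _ _
  set P := a*b - a'*b' with hP
  set E1 := efun m h (|a+b|) - efun m h (|a'+b'|) with hE1
  set E2 := efun m h (|a-b|) - efun m h (|a'-b'|) with hE2
  have tri : |P + E1/4 - E2/4| ≤ |P| + |E1|/4 + |E2|/4 := by
    calc |P + E1/4 - E2/4| ≤ |P + E1/4| + |E2/4| := abs_sub _ _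
      _ ≤ |P| + |E1/4| + |E2/4| := by
          have := abs_add_le P (E1/4)
          linarith
      _ = |P| + |E1|/4 + |E2|/4 := by
          rw [abs_div, abs_div]; norm_num
  rw [key]
  have hb1 : |E1| ≤ h * (|a-a'| + |b-b'|) := le_trans b1 (by gcongr)
  have hb2 : |E2| ≤ h * (|a-a'| + |b-b'|) := le_trans b2 (by gcongr)
  calc |P + E1/4 - E2/4| ≤ |P| + |E1|/4 + |E2|/4 := tri
    _ ≤ |P| + (h * (|a-a'| + |b-b'|))/4 + (h * (|a-a'| + |b-b'|))/4 := by gcongr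
    _ = |P| + (h/2) * (|a-a'| + |b-b'|) := by ring

/-! ### The iterated approximate-product sequence -/

def Yf (m : ℕ) (h : ℝ) (x : ℕ → ℝ) : ℕ → ℝ
  | 0 => x 0
  | (t+1) => gmul m h (Yf m h x t) (x (t+1))

lemma Yf_range {m : ℕ} {h : ℝ} (hh : 0 < h) (h3 : (m:ℝ)*h = 3)
    {x : ℕ → ℝ} (hx : ∀ j, |x j| ≤ 1) :
    ∀ t : ℕ, 2*(t:ℝ)*h ≤ 1 → |Yf m h x t| ≤ 1 + 2*t*h := by
  intro t
  induction t with
  | zero => intro _; simpa [Yf] using le_trans (hx 0) (by norm_num)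
  | succ t ih =>
    intro hth
    have hth' : 2*(t:ℝ)*h ≤ 1 := by push_cast at hth ⊢; nlinarith
    have hYt : |Yf m h x t| ≤ 2 := by
      have := ih hth'; nlinarith
    have herr := gmul_err hh h3 hYt (hx (t+1))
    have : |Yf m h x (t+1)| ≤ |Yf m h x t * x (t+1)| + 2*h := by
      show |gmul m h (Yf m h x t) (x (t+1))| ≤ _
      calc |gmul m h (Yf m h x t) (x (t+1))|
          ≤ |Yf m h x t * x (t+1)| + |gmul m h (Yf m h x t) (x (t+1)) - Yf m h x t * x (t+1)| := by
            have := abs_add_le (Yf m h x t * x (t+1))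
              (gmul m h (Yf m h x t) (x (t+1)) - Yf m h x t * x (t+1))
            simpa using this
        _ ≤ _ := by linarith
    have hprod : |Yf m h x t * x (t+1)| ≤ |Yf m h x t| := by
      rw [abs_mul]
      have := hx (t+1)
      nlinarith [abs_nonneg (Yf m h x t)]
    have := ih hth'
    push_cast
    push_cast at this
    nlinarith

lemma Yf_err {m : ℕ} {h : ℝ} (hh : 0 < h) (h3 : (m:ℝ)*h = 3)
    {x : ℕ → ℝ} (hx : ∀ j, |x j| ≤ 1) :
    ∀ t : ℕ, 2*(t:ℝ)*h ≤ 1 →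
      |Yf m h x t - ∏ k ∈ Finset.range (t+1), x k| ≤ 2*t*h := by
  intro t
  induction t with
  | zero => intro _; simp [Yf]
  | succ t ih =>
    intro hth
    have hth' : 2*(t:ℝ)*h ≤ 1 := by push_cast at hth ⊢; nlinarith
    have hYt : |Yf m h x t| ≤ 2 := by
      have := Yf_range hh h3 hx t hth'; nlinarith
    have herr := gmul_err hh h3 hYt (hx (t+1))
    have hstep : Yf m h x (t+1) - ∏ k ∈ Finset.range (t+2), x k
        = (gmul m h (Yf m h x t) (x (t+1)) - Yf m h x t * x (t+1))
          + (Yf m h x t - ∏ k ∈ Finset.range (t+1), x k) * x (t+1) := by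
      show gmul m h (Yf m h x t) (x (t+1)) - _ = _
      rw [Finset.prod_range_succ]; ring
    have hih := ih hth'
    have : |(Yf m h x t - ∏ k ∈ Finset.range (t+1), x k) * x (t+1)| ≤ 2*t*h := by
      rw [abs_mul]
      have := hx (t+1)
      nlinarith [abs_nonneg (Yf m h x t - ∏ k ∈ Finset.range (t+1), x k)]
    calc |Yf m h x (t+1) - ∏ k ∈ Finset.range (t+2), x k|
        ≤ |gmul m h (Yf m h x t) (x (t+1)) - Yf m h x t * x (t+1)|
          + |(Yf m h x t - ∏ k ∈ Finset.range (t+1), x k) * x (t+1)| := by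
          rw [hstep]; exact abs_add_le _ _
      _ ≤ 2*h + 2*t*h := by linarith
      _ = 2*(↑(t+1))*h := by push_cast; ring

lemma Yf_lip {m : ℕ} {h : ℝ} (hh : 0 < h) (hh1 : h ≤ 1) (h3 : (m:ℝ)*h = 3)
    {x x' : ℕ → ℝ} (hx : ∀ j, |x j| ≤ 1) (hx' : ∀ j, |x' j| ≤ 1) :
    ∀ t : ℕ, 2*(t:ℝ)*h ≤ 1 →
      |Yf m h x t - Yf m h x' t| ≤ 3*(1+h)^t * ∑ j ∈ Finset.range (t+1), |x j - x' j| := by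
  intro t
  induction t with
  | zero =>
    intro _
    show |x 0 - x' 0| ≤ _
    simp
    nlinarith [abs_nonneg (x 0 - x' 0)]
  | succ t ih =>
    intro hth
    have hth' : 2*(t:ℝ)*h ≤ 1 := by push_cast at hth ⊢; nlinarith
    have hYt : |Yf m h x t| ≤ 2 := by
      have := Yf_range hh h3 hx t hth'; nlinarith
    have hYt' : |Yf m h x' t| ≤ 2 := by
      have := Yf_range hh h3 hx' t hth'; nlinarith
    have hlip := gmul_lip hh h3 hYt (hx (t+1)) hYt' (hx' (t+1))
    have hprod : |Yf m h x t * x (t+1) - Yf m h x' t * x' (t+1)|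
        ≤ |Yf m h x t - Yf m h x' t| + 2 * |x (t+1) - x' (t+1)| := by
      have e : Yf m h x t * x (t+1) - Yf m h x' t * x' (t+1)
          = (Yf m h x t - Yf m h x' t) * x (t+1) + Yf m h x' t * (x (t+1) - x' (t+1)) := by ring
      rw [e]
      calc _ ≤ |(Yf m h x t - Yf m h x' t) * x (t+1)| + |Yf m h x' t * (x (t+1) - x' (t+1))| :=
            abs_add_le _ _
        _ ≤ _ := by
            rw [abs_mul, abs_mul]
            have h1 := hx (t+1)
            have h2 := abs_nonneg (Yf m h x t - Yf m h x' t)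
            have h3' := abs_nonneg (x (t+1) - x' (t+1))
            nlinarith
    have hih := ih hth'
    have hS : (0:ℝ) ≤ ∑ j ∈ Finset.range (t+1), |x j - x' j| :=
      Finset.sum_nonneg (fun j _ => abs_nonneg _)
    have hpow : (1:ℝ) ≤ (1+h)^t := one_le_pow₀ (by linarith)
    have hpow' : (1:ℝ) ≤ (1+h)^(t+1) := one_le_pow₀ (by linarith)
    have hSucc : ∑ j ∈ Finset.range (t+2), |x j - x' j|
        = (∑ j ∈ Finset.range (t+1), |x j - x' j|) + |x (t+1) - x' (t+1)| := by
      rw [Finset.sum_range_succ]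
    have goal1 : |Yf m h x (t+1) - Yf m h x' (t+1)|
        ≤ (1+h) * |Yf m h x t - Yf m h x' t| + (2+h/2) * |x (t+1) - x' (t+1)| := by
      show |gmul m h (Yf m h x t) (x (t+1)) - gmul m h (Yf m h x' t) (x' (t+1))| ≤ _
      have h2 := abs_nonneg (Yf m h x t - Yf m h x' t)
      have h3' := abs_nonneg (x (t+1) - x' (t+1))
      nlinarith [hlip, hprod]
    have hxd := abs_nonneg (x (t+1) - x' (t+1))
    have hhh : (2+h/2) ≤ 3 * (1+h)^(t+1) := by nlinarith [hpow', hh1]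
    have e2 : (1+h) * (3*(1+h)^t) = 3*(1+h)^(t+1) := by ring
    calc |Yf m h x (t+1) - Yf m h x' (t+1)|
        ≤ (1+h) * |Yf m h x t - Yf m h x' t| + (2+h/2) * |x (t+1) - x' (t+1)| := goal1
      _ ≤ (1+h) * (3*(1+h)^t * ∑ j ∈ Finset.range (t+1), |x j - x' j|)
          + 3*(1+h)^(t+1) * |x (t+1) - x' (t+1)| := by
          have m1 : (1+h) * |Yf m h x t - Yf m h x' t|
              ≤ (1+h) * (3*(1+h)^t * ∑ j ∈ Finset.range (t+1), |x j - x' j|) :=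
            mul_le_mul_of_nonneg_left hih (by linarith)
          have m2 : (2+h/2) * |x (t+1) - x' (t+1)| ≤ 3*(1+h)^(t+1) * |x (t+1) - x' (t+1)| :=
            mul_le_mul_of_nonneg_right hhh hxd
          linarith
      _ = 3*(1+h)^(t+1) * ((∑ j ∈ Finset.range (t+1), |x j - x' j|) + |x (t+1) - x' (t+1)|) := by
          ring
      _ = _ := by rw [hSucc]

lemma toReal_one_le {p : ℝ≥0∞} (hp : 1 ≤ p) (hp' : p ≠ ∞) : (1:ℝ) ≤ p.toReal := by
  have := ENNReal.toReal_mono hp' hp; simpa using this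

lemma abs_le_lpNorm {p : ℝ≥0∞} (hp : 1 ≤ p) {k : ℕ} (x : Fin k → ℝ) (i : Fin k) :
    |x i| ≤ lpNorm p x := by
  unfold lpNorm
  split_ifs with hinf
  · exact le_ciSup (f := fun j => |x j|) (Finite.bddAbove_range _) i
  · have hq := toReal_one_le hp hinf
    have hq0 : p.toReal ≠ 0 := by linarith
    have h1 : |x i| ^ p.toReal ≤ ∑ j, |x j| ^ p.toReal :=
      Finset.single_le_sum (f := fun j => |x j| ^ p.toReal)
        (fun j _ => Real.rpow_nonneg (abs_nonneg _) _) (Finset.mem_univ i)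
    calc |x i| = ((|x i| ^ p.toReal) ^ (1/p.toReal)) := by
          rw [← Real.rpow_mul (abs_nonneg _), mul_one_div, div_self hq0, Real.rpow_one]
      _ ≤ (∑ j, |x j| ^ p.toReal) ^ (1/p.toReal) :=
          Real.rpow_le_rpow (Real.rpow_nonneg (abs_nonneg _) _) h1 (by positivity)

lemma lpNorm_nonneg {p : ℝ≥0∞} {k : ℕ} (x : Fin k → ℝ) : 0 ≤ lpNorm p x := by
  unfold lpNorm
  split_ifs with hinf
  · exact Real.iSup_nonneg (fun i => abs_nonneg _)
  · positivity

lemma lpNorm_le {p : ℝ≥0∞} (hp : 1 ≤ p) {k : ℕ} (hk : 1 ≤ k) (x : Fin k → ℝ)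
    {C : ℝ} (hC : 0 ≤ C) (h : ∀ i, |x i| ≤ C) : lpNorm p x ≤ k * C := by
  have hk1 : (1:ℝ) ≤ (k:ℝ) := by exact_mod_cast hk
  unfold lpNorm
  split_ifs with hinf
  · have : Nonempty (Fin k) := ⟨⟨0, by omega⟩⟩
    refine le_trans (ciSup_le h) ?_
    nlinarith
  · have hq := toReal_one_le hp hinf
    have hq0 : p.toReal ≠ 0 := by linarith
    have h1 : ∑ i, |x i| ^ p.toReal ≤ (k:ℝ) * C ^ p.toReal := by
      calc ∑ i, |x i| ^ p.toReal ≤ ∑ _i : Fin k, C ^ p.toReal := by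
            apply Finset.sum_le_sum
            intro i _
            exact Real.rpow_le_rpow (abs_nonneg _) (h i) (by linarith)
        _ = (k:ℝ) * C ^ p.toReal := by
            rw [Finset.sum_const, Finset.card_univ, Fintype.card_fin, nsmul_eq_mul]
    calc (∑ i, |x i| ^ p.toReal) ^ (1/p.toReal)
        ≤ ((k:ℝ) * C ^ p.toReal) ^ (1/p.toReal) := by
          apply Real.rpow_le_rpow _ h1 (by positivity)
          positivity
      _ = (k:ℝ)^(1/p.toReal) * C := by
          rw [Real.mul_rpow (by positivity) (by positivity),
            ← Real.rpow_mul hC, mul_one_div, div_self hq0, Real.rpow_one]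
      _ ≤ (k:ℝ) * C := by
          apply mul_le_mul_of_nonneg_right _ hC
          calc (k:ℝ)^(1/p.toReal) ≤ (k:ℝ)^(1:ℝ) :=
              Real.rpow_le_rpow_of_exponent_le hk1 (by rw [div_le_one] <;> linarith)
            _ = k := Real.rpow_one _

/-! ### The network -/

def ind (a u : ℕ) : ℝ := if u = a then 1 else 0
def NV (d j u : ℕ) : ℝ := ind j u - ind (d + j) u
def hh (m : ℕ) : ℝ := 3 / m

def cvec (d m : ℕ) (u : ℕ) : ℝ :=
  if u < 2*d then 0
  else if u < 2*d + m then cc (hh m) (u - 2*d) / 4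
  else if u < 2*d + 2*m then cc (hh m) (u - (2*d+m)) / 4
  else if u < 2*d + 3*m then -(cc (hh m) (u - (2*d+2*m)) / 4)
  else -(cc (hh m) (u - (2*d+3*m)) / 4)

def stRow (d m t j : ℕ) : ℕ → ℝ := if j = t+1 then cvec d m else NV d j

def wfun (d m : ℕ) (k u j : ℕ) : ℝ :=
  if k = 0 then (if u < d then ind u j else -ind (u - d) j)
  else if k = 2*d - 1 then NV d u j
  else if k % 2 = 1 then
    (if u < d then NV d u j
     else if u < 2*d then -NV d (u-d) j
     else if u < 2*d+m then NV d ((k-1)/2) j + NV d ((k-1)/2+1) j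
     else if u < 2*d+2*m then -(NV d ((k-1)/2) j + NV d ((k-1)/2+1) j)
     else if u < 2*d+3*m then NV d ((k-1)/2) j - NV d ((k-1)/2+1) j
     else NV d ((k-1)/2+1) j - NV d ((k-1)/2) j)
  else
    (if u < d then stRow d m (k/2-1) u j else -(stRow d m (k/2-1) (u-d) j))

def bfun (d m : ℕ) (k u : ℕ) : ℝ :=
  if k % 2 = 1 ∧ k ≠ 2*d - 1 then
    (if u < 2*d then 0
     else if u < 2*d+m then -((u - 2*d : ℕ) : ℝ) * hh m
     else if u < 2*d+2*m then -((u - (2*d+m) : ℕ) : ℝ) * hh m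
     else if u < 2*d+3*m then -((u - (2*d+2*m) : ℕ) : ℝ) * hh m
     else -((u - (2*d+3*m) : ℕ) : ℝ) * hh m)
  else 0

def ldim (d m : ℕ) (k : ℕ) : ℕ :=
  if k = 0 ∨ k = 2*d then d else if k % 2 = 1 then 2*d else 2*d + 4*m

def Net (d m : ℕ) : DNN where
  L := 2*d - 1
  ℓ := ldim d m
  W := fun k => Matrix.of fun i j => wfun d m k i.1 j.1
  b := fun k i => bfun d m k i.1

/-! ### hidden-layer specifications -/

def Vst (m : ℕ) (x : ℕ → ℝ) (s u : ℕ) : ℝ := if u ≤ s then Yf m (hh m) x u else x u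

def nspec (d m : ℕ) (x : ℕ → ℝ) (s u : ℕ) : ℝ :=
  if u < d then relu (Vst m x s u) else relu (-(Vst m x s (u-d)))

def wspec (d m : ℕ) (x : ℕ → ℝ) (t u : ℕ) : ℝ :=
  if u < d then relu (Vst m x t u)
  else if u < 2*d then relu (-(Vst m x t (u-d)))
  else if u < 2*d+m then relu ((Yf m (hh m) x t + x (t+1)) - ((u - 2*d : ℕ) : ℝ) * hh m)
  else if u < 2*d+2*m then relu (-(Yf m (hh m) x t + x (t+1)) - ((u - (2*d+m) : ℕ) : ℝ) * hh m)
  else if u < 2*d+3*m then relu ((Yf m (hh m) x t - x (t+1)) - ((u - (2*d+2*m) : ℕ) : ℝ) * hh m)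
  else relu (-(Yf m (hh m) x t - x (t+1)) - ((u - (2*d+3*m) : ℕ) : ℝ) * hh m)

/-! ### small helper lemmas -/

lemma sum_ind_mul {n a : ℕ} (ha : a < n) (v : ℕ → ℝ) :
    ∑ u ∈ Finset.range n, ind a u * v u = v a := by
  have : ∀ u ∈ Finset.range n, ind a u * v u = if u = a then v u else 0 := by
    intro u _; unfold ind; split_ifs <;> simp
  rw [Finset.sum_congr rfl this, Finset.sum_ite_eq' (Finset.range n) a v,
    if_pos (Finset.mem_range.2 ha)]

lemma sum_NV_mul {n d j : ℕ} (hj : j < n) (hdj : d + j < n) (v : ℕ → ℝ) :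
    ∑ u ∈ Finset.range n, NV d j u * v u = v j - v (d + j) := by
  unfold NV
  simp only [sub_mul, Finset.sum_sub_distrib]
  rw [sum_ind_mul hj, sum_ind_mul hdj]

lemma Vst_zero (m : ℕ) (x : ℕ → ℝ) (u : ℕ) : Vst m x 0 u = x u := by
  unfold Vst
  rcases Nat.eq_zero_or_pos u with rfl|hu
  · rw [if_pos (le_refl 0)]; rfl
  · rw [if_neg (by omega)]

lemma Vst_succ_ne (m : ℕ) (x : ℕ → ℝ) (t : ℕ) {u : ℕ} (hu : u ≠ t+1) :
    Vst m x (t+1) u = Vst m x t u := by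
  unfold Vst
  by_cases h : u ≤ t
  · rw [if_pos (by omega), if_pos h]
  · rw [if_neg (by omega), if_neg h]

lemma Vst_le (m : ℕ) (x : ℕ → ℝ) {s u : ℕ} (h : u ≤ s) :
    Vst m x s u = Yf m (hh m) x u := if_pos h

lemma Vst_gt (m : ℕ) (x : ℕ → ℝ) {s u : ℕ} (h : s < u) : Vst m x s u = x u :=
  if_neg (by omega)

lemma nread {d m : ℕ} (x : ℕ → ℝ) (s : ℕ) {j : ℕ} (hj : j < d) :
    nspec d m x s j - nspec d m x s (d + j) = Vst m x s j := by
  unfold nspec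
  rw [if_pos hj, if_neg (by omega), show d + j - d = j from by omega]
  exact relu_sub_relu_neg _

lemma wread {d m : ℕ} (x : ℕ → ℝ) (t : ℕ) {j : ℕ} (hj : j < d) :
    wspec d m x t j - wspec d m x t (d + j) = Vst m x t j := by
  unfold wspec
  rw [if_pos hj, if_neg (by omega), if_pos (show d + j < 2*d by omega),
    show d + j - d = j from by omega]
  exact relu_sub_relu_neg _

lemma ldim_zero (d m : ℕ) : ldim d m 0 = d := by unfold ldim; rw [if_pos (Or.inl rfl)]

lemma ldim_last (d m : ℕ) (hd : 1 ≤ d) : ldim d m (2*d) = d := by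
  unfold ldim; rw [if_pos (Or.inr rfl)]

lemma ldim_odd (d m : ℕ) {k : ℕ} (hk : k % 2 = 1) : ldim d m k = 2*d := by
  unfold ldim; rw [if_neg (by omega), if_pos hk]

lemma ldim_even (d m : ℕ) {k : ℕ} (hk : k % 2 = 0) (h0 : k ≠ 0) (h2 : k ≠ 2*d) :
    ldim d m k = 2*d + 4*m := by
  unfold ldim; rw [if_neg (by omega), if_neg (by omega)]

/-- generic affine evaluation -/
lemma affine_eq (d m k : ℕ) (v : Fin (ldim d m k) → ℝ) (g : ℕ → ℝ)
    (hv : ∀ j : Fin (ldim d m k), v j = g j.1) (i : Fin (ldim d m (k+1))) :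
    DNN.affine (Net d m) k v i
      = (∑ u ∈ Finset.range (ldim d m k), wfun d m k i.1 u * g u) + bfun d m k i.1 := by
  show (∑ j : Fin (ldim d m k), (Net d m).W k i j * v j) + (Net d m).b k i = _
  congr 1
  have step : ∀ j : Fin (ldim d m k), (Net d m).W k i j * v j = wfun d m k i.1 j.1 * g j.1 := by
    intro j
    rw [hv j]
    rfl
  rw [Finset.sum_congr rfl (fun j _ => step j)]
  exact Fin.sum_univ_eq_sum_range (fun u => wfun d m k i.1 u * g u) _

end LemmaAux
namespace LemmaAux
section Layers

variable (d m : ℕ) (x : ℕ → ℝ)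

/-- the input of the network as a `Fin`-function -/
def inp : Fin (ldim d m 0) → ℝ := fun j => x j.1

lemma hid1 (hd : 1 ≤ d) (i : Fin (ldim d m 1)) :
    DNN.hidden (Net d m) 1 (inp d m x) i = nspec d m x 0 i.1 := by
  have hld1 : ldim d m 1 = 2*d := ldim_odd d m (by omega)
  have hi : i.1 < 2*d := by have := i.2; omega
  show max (DNN.affine (Net d m) 0 (inp d m x) i) 0 = _
  rw [affine_eq d m 0 (inp d m x) x (fun j => rfl) i]
  have hb : bfun d m 0 i.1 = 0 := by unfold bfun; rw [if_neg (by omega)]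
  rw [hb, add_zero, ldim_zero]
  unfold nspec
  by_cases hii : i.1 < d
  · have hw : ∀ u, wfun d m 0 i.1 u = ind i.1 u * x u → True := fun _ _ => trivial
    have hw' : ∀ u, wfun d m 0 i.1 u * x u = ind i.1 u * x u := by
      intro u; unfold wfun; rw [if_pos rfl, if_pos hii]
    rw [Finset.sum_congr rfl (fun u _ => hw' u), sum_ind_mul hii, if_pos hii, Vst_zero]
    rfl
  · have hw' : ∀ u, wfun d m 0 i.1 u * x u = -(ind (i.1 - d) u * x u) := by
      intro u; unfold wfun; rw [if_pos rfl, if_neg hii]; ring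
    rw [Finset.sum_congr rfl (fun u _ => hw' u), Finset.sum_neg_distrib,
      sum_ind_mul (show i.1 - d < d by omega), if_neg hii, Vst_zero]
    rfl

lemma hid_wide (t : ℕ) (ht : t + 2 ≤ d)
    (IH : ∀ j : Fin (ldim d m (2*t+1)),
      DNN.hidden (Net d m) (2*t+1) (inp d m x) j = nspec d m x t j.1) :
    ∀ i : Fin (ldim d m (2*t+2)),
      DNN.hidden (Net d m) (2*t+2) (inp d m x) i = wspec d m x t i.1 := by
  intro i
  have hld : ldim d m (2*t+1) = 2*d := ldim_odd d m (by omega)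
  have hld2 : ldim d m (2*t+2) = 2*d + 4*m :=
    ldim_even d m (by omega) (by omega) (by omega)
  have hi : i.1 < 2*d + 4*m := by have := i.2; omega
  have hk0 : (2*t+1) ≠ 0 := by omega
  have hkL : (2*t+1) ≠ 2*d - 1 := by omega
  have hko : (2*t+1) % 2 = 1 := by omega
  have htt : (2*t+1-1)/2 = t := by omega
  show max (DNN.affine (Net d m) (2*t+1) (DNN.hidden (Net d m) (2*t+1) (inp d m x)) i) 0 = _
  rw [affine_eq d m (2*t+1) _ (nspec d m x t) IH i]
  have hb : bfun d m (2*t+1) i.1 = (if i.1 < 2*d then 0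
      else if i.1 < 2*d+m then -((i.1 - 2*d : ℕ) : ℝ) * hh m
      else if i.1 < 2*d+2*m then -((i.1 - (2*d+m) : ℕ) : ℝ) * hh m
      else if i.1 < 2*d+3*m then -((i.1 - (2*d+2*m) : ℕ) : ℝ) * hh m
      else -((i.1 - (2*d+3*m) : ℕ) : ℝ) * hh m) := by
    unfold bfun; rw [if_pos ⟨hko, hkL⟩]
  have hwfun : ∀ u, wfun d m (2*t+1) i.1 u =
      (if i.1 < d then NV d i.1 u
       else if i.1 < 2*d then -NV d (i.1-d) u
       else if i.1 < 2*d+m then NV d t u + NV d (t+1) u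
       else if i.1 < 2*d+2*m then -(NV d t u + NV d (t+1) u)
       else if i.1 < 2*d+3*m then NV d t u - NV d (t+1) u
       else NV d (t+1) u - NV d t u) := by
    intro u
    unfold wfun
    rw [if_neg hk0, if_neg hkL, if_pos hko, htt]
  rw [hb, hld]
  have readt : ∑ u ∈ Finset.range (2*d), NV d t u * nspec d m x t u = Yf m (hh m) x t := by
    rw [sum_NV_mul (by omega) (by omega), nread x t (by omega), Vst_le m x (le_refl t)]
  have readt1 : ∑ u ∈ Finset.range (2*d), NV d (t+1) u * nspec d m x t u = x (t+1) := by
    rw [sum_NV_mul (by omega) (by omega), nread x t (by omega), Vst_gt m x (by omega)]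
  unfold wspec
  by_cases h1 : i.1 < d
  · have hw' : ∀ u, wfun d m (2*t+1) i.1 u * nspec d m x t u
        = NV d i.1 u * nspec d m x t u := by
      intro u; rw [hwfun u, if_pos h1]
    rw [Finset.sum_congr rfl (fun u _ => hw' u), sum_NV_mul (by omega) (by omega),
      nread x t h1, if_pos (show i.1 < 2*d by omega), if_pos h1, add_zero]
    rfl
  by_cases h2 : i.1 < 2*d
  · have hw' : ∀ u, wfun d m (2*t+1) i.1 u * nspec d m x t u
        = -(NV d (i.1-d) u * nspec d m x t u) := by
      intro u; rw [hwfun u, if_neg h1, if_pos h2]; ring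
    rw [Finset.sum_congr rfl (fun u _ => hw' u), Finset.sum_neg_distrib,
      sum_NV_mul (by omega) (by omega), nread x t (by omega),
      if_pos h2, if_neg h1, if_pos h2, add_zero]
    rfl
  by_cases h3 : i.1 < 2*d+m
  · have hw' : ∀ u, wfun d m (2*t+1) i.1 u * nspec d m x t u
        = NV d t u * nspec d m x t u + NV d (t+1) u * nspec d m x t u := by
      intro u; rw [hwfun u, if_neg h1, if_neg h2, if_pos h3]; ring
    rw [Finset.sum_congr rfl (fun u _ => hw' u), Finset.sum_add_distrib, readt, readt1,
      if_neg h2, if_pos h3, if_neg h1, if_neg h2, if_pos h3]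
    unfold relu; congr 1; ring
  by_cases h4 : i.1 < 2*d+2*m
  · have hw' : ∀ u, wfun d m (2*t+1) i.1 u * nspec d m x t u
        = -(NV d t u * nspec d m x t u + NV d (t+1) u * nspec d m x t u) := by
      intro u; rw [hwfun u, if_neg h1, if_neg h2, if_neg h3, if_pos h4]; ring
    rw [Finset.sum_congr rfl (fun u _ => hw' u), Finset.sum_neg_distrib,
      Finset.sum_add_distrib, readt, readt1,
      if_neg h2, if_neg h3, if_pos h4, if_neg h1, if_neg h2, if_neg h3, if_pos h4]
    show max (-(Yf m (hh m) x t + x (t+1)) + _) 0 = _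
    unfold relu; congr 1; ring
  by_cases h5 : i.1 < 2*d+3*m
  · have hw' : ∀ u, wfun d m (2*t+1) i.1 u * nspec d m x t u
        = NV d t u * nspec d m x t u - NV d (t+1) u * nspec d m x t u := by
      intro u; rw [hwfun u, if_neg h1, if_neg h2, if_neg h3, if_neg h4, if_pos h5]; ring
    rw [Finset.sum_congr rfl (fun u _ => hw' u), Finset.sum_sub_distrib, readt, readt1,
      if_neg h2, if_neg h3, if_neg h4, if_pos h5, if_neg h1, if_neg h2, if_neg h3, if_neg h4,
      if_pos h5]
    unfold relu; congr 1; ring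
  · have hw' : ∀ u, wfun d m (2*t+1) i.1 u * nspec d m x t u
        = NV d (t+1) u * nspec d m x t u - NV d t u * nspec d m x t u := by
      intro u; rw [hwfun u, if_neg h1, if_neg h2, if_neg h3, if_neg h4, if_neg h5]; ring
    rw [Finset.sum_congr rfl (fun u _ => hw' u), Finset.sum_sub_distrib, readt, readt1,
      if_neg h2, if_neg h3, if_neg h4, if_neg h5, if_neg h1, if_neg h2, if_neg h3, if_neg h4,
      if_neg h5]
    show max (x (t+1) - Yf m (hh m) x t + _) 0 = _
    unfold relu; congr 1; ring

lemma hh_nonneg (m : ℕ) : 0 ≤ hh m := by unfold hh; positivity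

lemma sum_cvec (t : ℕ) (ht : t + 2 ≤ d) :
    ∑ u ∈ Finset.range (2*d+4*m), cvec d m u * wspec d m x t u
      = gmul m (hh m) (Yf m (hh m) x t) (x (t+1)) := by
  set A := Yf m (hh m) x t + x (t+1) with hA
  set B := Yf m (hh m) x t - x (t+1) with hB
  rw [Finset.sum_range_add]
  have head : ∑ u ∈ Finset.range (2*d), cvec d m u * wspec d m x t u = 0 := by
    apply Finset.sum_eq_zero
    intro u hu
    have hu' : u < 2*d := Finset.mem_range.1 hu
    unfold cvec
    rw [if_pos hu', zero_mul]
  rw [head, zero_add]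
  rw [show 4*m = m+(m+(m+m)) from by ring, Finset.sum_range_add, Finset.sum_range_add,
    Finset.sum_range_add]
  have c1 : ∀ v ∈ Finset.range m, cvec d m (2*d+v) * wspec d m x t (2*d+v)
      = cc (hh m) v / 4 * relu (A - (v:ℝ) * hh m) := by
    intro v hv
    have hv' : v < m := Finset.mem_range.1 hv
    unfold cvec wspec
    rw [if_neg (by omega), if_pos (by omega), if_neg (by omega), if_neg (by omega),
      if_pos (by omega), show 2*d+v - 2*d = v from by omega]
  have c2 : ∀ v ∈ Finset.range m, cvec d m (2*d+(m+v)) * wspec d m x t (2*d+(m+v))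
      = cc (hh m) v / 4 * relu (-A - (v:ℝ) * hh m) := by
    intro v hv
    have hv' : v < m := Finset.mem_range.1 hv
    unfold cvec wspec
    rw [if_neg (by omega), if_neg (by omega), if_pos (by omega), if_neg (by omega),
      if_neg (by omega), if_neg (by omega), if_pos (by omega),
      show 2*d+(m+v) - (2*d+m) = v from by omega]
  have c3 : ∀ v ∈ Finset.range m, cvec d m (2*d+(m+(m+v))) * wspec d m x t (2*d+(m+(m+v)))
      = -(cc (hh m) v / 4) * relu (B - (v:ℝ) * hh m) := by
    intro v hv
    have hv' : v < m := Finset.mem_range.1 hv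
    unfold cvec wspec
    rw [if_neg (by omega), if_neg (by omega), if_neg (by omega), if_pos (by omega),
      if_neg (by omega), if_neg (by omega), if_neg (by omega), if_neg (by omega),
      if_pos (by omega), show 2*d+(m+(m+v)) - (2*d+2*m) = v from by omega]
  have c4 : ∀ v ∈ Finset.range m,
      cvec d m (2*d+(m+(m+(m+v)))) * wspec d m x t (2*d+(m+(m+(m+v))))
      = -(cc (hh m) v / 4) * relu (-B - (v:ℝ) * hh m) := by
    intro v hv
    have hv' : v < m := Finset.mem_range.1 hv
    unfold cvec wspec
    rw [if_neg (by omega), if_neg (by omega), if_neg (by omega), if_neg (by omega),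
      if_neg (by omega), if_neg (by omega), if_neg (by omega), if_neg (by omega),
      if_neg (by omega), show 2*d+(m+(m+(m+v))) - (2*d+3*m) = v from by omega]
  rw [Finset.sum_congr rfl c1, Finset.sum_congr rfl c2, Finset.sum_congr rfl c3,
    Finset.sum_congr rfl c4]
  have comb : ∑ v ∈ Finset.range m, cc (hh m) v / 4 * relu (A - (v:ℝ) * hh m)
      + (∑ v ∈ Finset.range m, cc (hh m) v / 4 * relu (-A - (v:ℝ) * hh m)
      + (∑ v ∈ Finset.range m, -(cc (hh m) v / 4) * relu (B - (v:ℝ) * hh m)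
      + ∑ v ∈ Finset.range m, -(cc (hh m) v / 4) * relu (-B - (v:ℝ) * hh m)))
      = (∑ v ∈ Finset.range m, cc (hh m) v * relu (|A| - (v:ℝ) * hh m)) / 4
        - (∑ v ∈ Finset.range m, cc (hh m) v * relu (|B| - (v:ℝ) * hh m)) / 4 := by
    rw [← Finset.sum_add_distrib, ← Finset.sum_add_distrib, ← Finset.sum_add_distrib,
      Finset.sum_div, Finset.sum_div, ← Finset.sum_sub_distrib]
    apply Finset.sum_congr rfl
    intro v _
    have hc : (0:ℝ) ≤ (v:ℝ) * hh m := by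
      have := hh_nonneg m; positivity
    have e1 := relu_abs A hc
    have e2 := relu_abs B hc
    calc cc (hh m) v / 4 * relu (A - ↑v * hh m)
        + (cc (hh m) v / 4 * relu (-A - ↑v * hh m)
        + (-(cc (hh m) v / 4) * relu (B - ↑v * hh m)
        + -(cc (hh m) v / 4) * relu (-B - ↑v * hh m)))
        = cc (hh m) v / 4 * (relu (A - ↑v * hh m) + relu (-A - ↑v * hh m))
          - cc (hh m) v / 4 * (relu (B - ↑v * hh m) + relu (-B - ↑v * hh m)) := by ring
      _ = cc (hh m) v * relu (|A| - ↑v * hh m) / 4 - cc (hh m) v * relu (|B| - ↑v * hh m) / 4 := by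
          rw [e1, e2]; ring
  rw [comb]
  unfold gmul sfun
  rw [← hA, ← hB]
  ring

lemma hid_narrow_step (t : ℕ) (ht : t + 2 ≤ d)
    (IH : ∀ j : Fin (ldim d m (2*t+2)),
      DNN.hidden (Net d m) (2*t+2) (inp d m x) j = wspec d m x t j.1) :
    ∀ i : Fin (ldim d m (2*t+3)),
      DNN.hidden (Net d m) (2*t+3) (inp d m x) i = nspec d m x (t+1) i.1 := by
  intro i
  have hld : ldim d m (2*t+2) = 2*d + 4*m := ldim_even d m (by omega) (by omega) (by omega)
  have hld2 : ldim d m (2*t+3) = 2*d := ldim_odd d m (by omega)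
  have hi : i.1 < 2*d := by have := i.2; omega
  have hk0 : (2*t+2) ≠ 0 := by omega
  have hkL : (2*t+2) ≠ 2*d - 1 := by omega
  have hke : ¬((2*t+2) % 2 = 1) := by omega
  have htt : (2*t+2)/2 - 1 = t := by omega
  show max (DNN.affine (Net d m) (2*t+2) (DNN.hidden (Net d m) (2*t+2) (inp d m x)) i) 0 = _
  rw [affine_eq d m (2*t+2) _ (wspec d m x t) IH i]
  have hb : bfun d m (2*t+2) i.1 = 0 := by unfold bfun; rw [if_neg (by omega)]
  have hwfun : ∀ u, wfun d m (2*t+2) i.1 u =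
      (if i.1 < d then stRow d m t i.1 u else -(stRow d m t (i.1-d) u)) := by
    intro u
    unfold wfun
    rw [if_neg hk0, if_neg hkL, if_neg hke, htt]
  rw [hb, add_zero, hld]
  unfold nspec
  by_cases h1 : i.1 < d
  · rw [if_pos h1]
    by_cases h2 : i.1 = t+1
    · have hw' : ∀ u, wfun d m (2*t+2) i.1 u * wspec d m x t u
          = cvec d m u * wspec d m x t u := by
        intro u; rw [hwfun u, if_pos h1]; unfold stRow; rw [if_pos h2]
      rw [Finset.sum_congr rfl (fun u _ => hw' u), sum_cvec d m x t ht, h2,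
        Vst_le m x (le_refl (t+1))]
      rfl
    · have hw' : ∀ u, wfun d m (2*t+2) i.1 u * wspec d m x t u
          = NV d i.1 u * wspec d m x t u := by
        intro u; rw [hwfun u, if_pos h1]; unfold stRow; rw [if_neg h2]
      rw [Finset.sum_congr rfl (fun u _ => hw' u), sum_NV_mul (by omega) (by omega),
        wread x t h1, Vst_succ_ne m x t h2]
      rfl
  · rw [if_neg h1]
    by_cases h2 : i.1 - d = t+1
    · have hw' : ∀ u, wfun d m (2*t+2) i.1 u * wspec d m x t u
          = -(cvec d m u * wspec d m x t u) := by
        intro u; rw [hwfun u, if_neg h1]; unfold stRow; rw [if_pos h2]; ring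
      rw [Finset.sum_congr rfl (fun u _ => hw' u), Finset.sum_neg_distrib,
        sum_cvec d m x t ht, h2, Vst_le m x (le_refl (t+1))]
      rfl
    · have hw' : ∀ u, wfun d m (2*t+2) i.1 u * wspec d m x t u
          = -(NV d (i.1-d) u * wspec d m x t u) := by
        intro u; rw [hwfun u, if_neg h1]; unfold stRow; rw [if_neg h2]; ring
      rw [Finset.sum_congr rfl (fun u _ => hw' u), Finset.sum_neg_distrib,
        sum_NV_mul (by omega) (by omega), wread x t (by omega), Vst_succ_ne m x t h2]
      rfl

lemma hid_master (hd : 1 ≤ d) :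
    ∀ s, s < d → ∀ i : Fin (ldim d m (2*s+1)),
      DNN.hidden (Net d m) (2*s+1) (inp d m x) i = nspec d m x s i.1 := by
  intro s
  induction s with
  | zero => intro _ i; exact hid1 d m x hd i
  | succ s ih =>
    intro hs
    have IH1 := ih (by omega)
    have IH2 := hid_wide d m x s (by omega) IH1
    have IH3 := hid_narrow_step d m x s (by omega) IH2
    rw [show 2*(s+1)+1 = 2*s+3 from by ring]
    exact IH3

lemma realize_master (hd : 1 ≤ d) (i : Fin (ldim d m (2*d-1+1))) :
    DNN.realize (Net d m) (inp d m x) i = Yf m (hh m) x i.1 := by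
  have hlast := hid_master d m x hd (d-1) (by omega)
  rw [show 2*(d-1)+1 = 2*d-1 from by omega] at hlast
  have hldL : ldim d m (2*d-1) = 2*d := ldim_odd d m (by omega)
  have hldO : ldim d m (2*d-1+1) = d := by
    unfold ldim; rw [if_pos (Or.inr (by omega))]
  have hi : i.1 < d := by have := i.2; omega
  show DNN.affine (Net d m) (2*d-1) (DNN.hidden (Net d m) (2*d-1) (inp d m x)) i = _
  rw [affine_eq d m (2*d-1) _ (nspec d m x (d-1)) hlast i]
  have hb : bfun d m (2*d-1) i.1 = 0 := by
    unfold bfun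
    rw [if_neg (by intro hc; exact hc.2 rfl)]
  have hw' : ∀ u, wfun d m (2*d-1) i.1 u * nspec d m x (d-1) u
      = NV d i.1 u * nspec d m x (d-1) u := by
    intro u; unfold wfun; rw [if_neg (by omega), if_pos rfl]
  rw [hb, add_zero, hldL, Finset.sum_congr rfl (fun u _ => hw' u),
    sum_NV_mul (by omega) (by omega), nread x (d-1) hi, Vst_le m x (by omega)]

end Layers

end LemmaAux
namespace LemmaAux
def extf (d : ℕ) (x : Fin d → ℝ) : ℕ → ℝ := fun u => if hu : u < d then x ⟨u, hu⟩ else 0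

lemma prod_Iic_eq (d : ℕ) (x : Fin d → ℝ) (i : Fin d) :
    ∏ j ∈ Finset.Iic i, x j = ∏ k ∈ Finset.range (i.1+1), extf d x k := by
  have h1 : Finset.Iic i = Finset.filter (fun j => j ≤ i) Finset.univ := by
    ext j; simp [Finset.mem_Iic]
  rw [h1, Finset.prod_filter]
  have h2 : ∀ j : Fin d, (if j ≤ i then x j else 1)
      = (if j.1 ≤ i.1 then extf d x j.1 else 1) := by
    intro j
    simp only [Fin.le_def]
    by_cases hc : j.1 ≤ i.1
    · rw [if_pos hc, if_pos hc]; unfold extf; rw [dif_pos j.2]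
    · rw [if_neg hc, if_neg hc]
  have h3 : ∏ j : Fin d, (if j.1 ≤ i.1 then extf d x j.1 else 1)
      = ∏ u ∈ Finset.range d, (if u ≤ i.1 then extf d x u else 1) :=
    Fin.prod_univ_eq_prod_range (fun u => if u ≤ i.1 then extf d x u else 1) d
  rw [Finset.prod_congr rfl (fun j _ => h2 j), h3]
  rw [← Finset.prod_subset (Finset.range_subset_range.2 (show i.1+1 ≤ d from i.2) :
      Finset.range (i.1+1) ⊆ Finset.range d)]
  · apply Finset.prod_congr rfl
    intro k hk
    have : k ≤ i.1 := by have := Finset.mem_range.1 hk; omega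
    rw [if_pos this]
  · intro k hk1 hk2
    have hk2' : ¬ (k < i.1+1) := fun hc => hk2 (Finset.mem_range.2 hc)
    rw [if_neg (by omega)]

lemma params_le (d m : ℕ) (hd : 1 ≤ d) :
    (Net d m).params ≤ 2*d * ((2*d+4*m+1) * (2*d+1)) := by
  unfold DNN.params
  have hL : (Net d m).L + 1 = 2*d := by show 2*d-1+1 = 2*d; omega
  rw [hL]
  have hterm : ∀ k ∈ Finset.range (2*d),
      (Net d m).ℓ (k+1) * ((Net d m).ℓ k + 1) ≤ (2*d+4*m+1)*(2*d+1) := by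
    intro k hk
    show ldim d m (k+1) * (ldim d m k + 1) ≤ _
    have H : (ldim d m (k+1) ≤ 2*d+4*m ∧ ldim d m k ≤ 2*d)
        ∨ (ldim d m (k+1) ≤ 2*d ∧ ldim d m k ≤ 2*d+4*m) := by
      unfold ldim; split_ifs <;> omega
    rcases H with ⟨ha,hb⟩|⟨ha,hb⟩
    · calc ldim d m (k+1) * (ldim d m k + 1) ≤ (2*d+4*m) * (2*d+1) :=
          Nat.mul_le_mul ha (by omega)
        _ ≤ _ := Nat.mul_le_mul (by omega) le_rfl
    · calc ldim d m (k+1) * (ldim d m k + 1) ≤ (2*d+1) * (2*d+4*m+1) :=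
          Nat.mul_le_mul (by omega) (by omega)
        _ = (2*d+4*m+1) * (2*d+1) := Nat.mul_comm _ _
  calc ∑ k ∈ Finset.range (2*d), (Net d m).ℓ (k+1) * ((Net d m).ℓ k + 1)
      ≤ (Finset.range (2*d)).card • ((2*d+4*m+1)*(2*d+1)) :=
        Finset.sum_le_card_nsmul _ _ _ hterm
    _ = 2*d * ((2*d+4*m+1)*(2*d+1)) := by rw [Finset.card_range, smul_eq_mul]


end LemmaAux

set_option maxHeartbeats 1600000 in
open LemmaAux in
/-- **Lemma 3.8**: approximation of the extended product function
`𝔭_d(x) = (x_1, x_1x_2, …, x_1⋯x_d)` on `[-1,1]^d` with Lipschitz constant `√32 d^{7/2}`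
at cost `≤ K d^K ε⁻¹`. -/
theorem extended_product_approx :
    ∃ K : ℕ, 0 < K ∧
      ∀ d : ℕ, 0 < d → ∀ p : ℝ≥0∞, 1 ≤ p → ∀ ε : ℝ, 0 < ε → ε ≤ 1 →
        Cost p (cube d (-1) 1) (fun x (i : Fin d) => ∏ j ∈ Finset.Iic i, x j)
            (Real.sqrt 32 * (d : ℝ) ^ ((7 : ℝ) / 2)) ε ≤
          ENNReal.ofReal ((K : ℝ) * (d : ℝ) ^ K * ε⁻¹) := by
  refine ⟨306, by norm_num, ?_⟩
  intro d hd p hp ε hε hε1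
  have hd1 : 1 ≤ d := hd
  set K0 := ⌈ε⁻¹⌉₊ with hK0def
  have hK0 : 1 ≤ K0 := Nat.one_le_ceil_iff.2 (by positivity)
  set mm := 6*d^2*K0 with hmmdef
  have hdd : d ≤ d^2 := Nat.le_self_pow (by norm_num) d
  have hm6 : 6*d ≤ mm := by
    have h1 : 6*d ≤ 6*d^2 := by omega
    have h2 : 6*d^2 ≤ 6*d^2*K0 := Nat.le_mul_of_pos_right _ (by omega)
    omega
  have hmpos : 0 < mm := by omega
  have hmmR : (0:ℝ) < mm := by exact_mod_cast hmpos
  have hdR : (1:ℝ) ≤ d := by exact_mod_cast hd1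
  have hdpos : (0:ℝ) < d := by linarith
  have hhpos : 0 < hh mm := by unfold hh; positivity
  have h3 : (mm:ℝ) * hh mm = 3 := by unfold hh; field_simp
  have hh1 : hh mm ≤ 1 := by
    unfold hh
    rw [div_le_one hmmR]
    have : (6:ℝ) ≤ mm := by
      have : 6 ≤ mm := by omega
      exact_mod_cast this
    linarith
  have hdh : 2*(d:ℝ)*hh mm ≤ 1 := by
    have e : 2*(d:ℝ)*hh mm = 6*d/mm := by unfold hh; ring
    rw [e, div_le_one hmmR]
    have : ((6*d:ℕ):ℝ) ≤ ((mm:ℕ):ℝ) := by exact_mod_cast hm6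
    push_cast at this
    linarith
  have hinv : (1:ℝ) ≤ ε⁻¹ := by
    rw [show (1:ℝ) = (1:ℝ)⁻¹ from by norm_num]
    exact inv_anti₀ hε hε1
  -- the network and its realization
  have hmΦ : (Net d mm).ℓ 0 = d := ldim_zero d mm
  have hnΦ : (Net d mm).ℓ ((Net d mm).L + 1) = d := by
    show ldim d mm (2*d-1+1) = d
    unfold ldim
    rw [if_pos (Or.inr (by omega))]
  set g : (Fin d → ℝ) → (Fin d → ℝ) := fun x i => Yf mm (hh mm) (extf d x) i.1 with hgdef
  have hreal : (Net d mm).Realizes g := by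
    refine ⟨hmΦ, hnΦ, ?_⟩
    intro x i
    have hinp : (fun j : Fin ((Net d mm).ℓ 0) => x (Fin.cast hmΦ j)) = inp d mm (extf d x) := by
      funext j
      show x (Fin.cast hmΦ j) = extf d x j.1
      have hj : j.1 < d := by
        have := j.2
        omega
      unfold extf
      rw [dif_pos hj]
      exact congrArg x (Fin.ext rfl)
    show g x i = DNN.realize (Net d mm) _ (Fin.cast hnΦ.symm i)
    rw [hinp]
    exact (realize_master d mm (extf d x) hd1 (Fin.cast hnΦ.symm i)).symm
  -- basic facts about cube membership
  have habs : ∀ x : Fin d → ℝ, x ∈ cube d (-1) 1 → ∀ u, |extf d x u| ≤ 1 := by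
    intro x hx u
    unfold extf
    by_cases hu : u < d
    · rw [dif_pos hu]
      exact abs_le.2 ⟨hx.1 ⟨u,hu⟩, hx.2 ⟨u,hu⟩⟩
    · rw [dif_neg hu]; norm_num
  -- key numeric bound
  have hkey : 2*(d:ℝ)*hh mm ≤ ε/d := by
    have hεK : 1 ≤ ε * K0 := by
      calc (1:ℝ) = ε * ε⁻¹ := by field_simp
        _ ≤ ε * K0 := by
            apply mul_le_mul_of_nonneg_left (Nat.le_ceil ε⁻¹) (le_of_lt hε)
    have e : 2*(d:ℝ)*hh mm = 6*d/mm := by unfold hh; ring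
    rw [e, div_le_div_iff₀ hmmR hdpos]
    have hmmr : (mm:ℝ) = 6*(d:ℝ)^2*(K0:ℝ) := by rw [hmmdef]; push_cast; ring
    rw [hmmr]
    nlinarith [hεK, hdpos, sq_nonneg (d:ℝ)]
  -- error bound
  have herr : ∀ x ∈ cube d (-1) 1,
      lpNorm p (g x - (fun y (i : Fin d) => ∏ j ∈ Finset.Iic i, y j) x) ≤ ε := by
    intro x hx
    have hpc : ∀ i : Fin d, |(g x - fun (i : Fin d) => ∏ j ∈ Finset.Iic i, x j) i| ≤ ε/d := by
      intro i
      have e : (g x - fun (i : Fin d) => ∏ j ∈ Finset.Iic i, x j) i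
          = Yf mm (hh mm) (extf d x) i.1 - ∏ k ∈ Finset.range (i.1+1), extf d x k := by
        simp only [Pi.sub_apply]
        rw [prod_Iic_eq d x i]
      rw [e]
      have hth : 2*(i.1:ℝ)*hh mm ≤ 1 := by
        have hi : (i.1:ℝ) ≤ d := by exact_mod_cast le_of_lt i.2
        nlinarith [hhpos]
      have hR2 := Yf_err hhpos h3 (habs x hx) i.1 hth
      have hi : (i.1:ℝ) ≤ d := by exact_mod_cast le_of_lt i.2
      calc |Yf mm (hh mm) (extf d x) i.1 - ∏ k ∈ Finset.range (i.1+1), extf d x k|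
          ≤ 2*(i.1:ℝ)*hh mm := hR2
        _ ≤ 2*(d:ℝ)*hh mm := by nlinarith [hhpos]
        _ ≤ ε/d := hkey
    have := lpNorm_le hp hd1 _ (by positivity : (0:ℝ) ≤ ε/d) hpc
    calc lpNorm p (g x - fun (i : Fin d) => ∏ j ∈ Finset.Iic i, x j)
        ≤ d * (ε/d) := this
      _ = ε := by field_simp
  -- Lipschitz bound
  have hlip : ∀ x ∈ cube d (-1) 1, ∀ y ∈ cube d (-1) 1,
      lpNorm p (g x - g y) ≤ (Real.sqrt 32 * (d:ℝ)^((7:ℝ)/2)) * lpNorm p (x - y) := by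
    intro x hx y hy
    have hlpnn : (0:ℝ) ≤ lpNorm p (x - y) := lpNorm_nonneg _
    have hsum : ∑ u ∈ Finset.range d, |extf d x u - extf d y u| ≤ d * lpNorm p (x - y) := by
      have hterm : ∀ u ∈ Finset.range d, |extf d x u - extf d y u| ≤ lpNorm p (x - y) := by
        intro u hu
        have hu' : u < d := Finset.mem_range.1 hu
        unfold extf
        rw [dif_pos hu', dif_pos hu']
        have := abs_le_lpNorm hp (x - y) ⟨u,hu'⟩
        simpa [Pi.sub_apply] using this
      calc ∑ u ∈ Finset.range d, |extf d x u - extf d y u|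
          ≤ (Finset.range d).card • lpNorm p (x - y) :=
            Finset.sum_le_card_nsmul _ _ _ hterm
        _ = d * lpNorm p (x - y) := by rw [Finset.card_range, nsmul_eq_mul]
    have h32 : (5:ℝ) ≤ Real.sqrt 32 := (Real.le_sqrt (by norm_num) (by norm_num)).2 (by norm_num)
    by_cases hdone : d = 1
    · subst hdone
      have hpc : ∀ i : Fin 1, |(g x - g y) i| ≤ lpNorm p (x - y) := by
        intro i
        have hi0 : i.1 = 0 := by omega
        have e1 : (g x - g y) i = extf 1 x 0 - extf 1 y 0 := by
          show Yf mm (hh mm) (extf 1 x) i.1 - Yf mm (hh mm) (extf 1 y) i.1 = _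
          rw [hi0]
          simp [Yf]
        rw [e1]
        unfold extf
        rw [dif_pos (by norm_num : (0:ℕ) < 1), dif_pos (by norm_num : (0:ℕ) < 1)]
        have := abs_le_lpNorm hp (x - y) ⟨0, by norm_num⟩
        simpa [Pi.sub_apply] using this
      have hN := lpNorm_le hp le_rfl _ hlpnn hpc
      have h1r : ((1:ℕ):ℝ) = (1:ℝ) := by norm_num
      calc lpNorm p (g x - g y) ≤ ((1:ℕ):ℝ) * lpNorm p (x - y) := hN
        _ ≤ (Real.sqrt 32 * ((1:ℕ):ℝ)^((7:ℝ)/2)) * lpNorm p (x - y) := by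
            rw [h1r, Real.one_rpow]
            nlinarith
    · have hd2 : 2 ≤ d := by omega
      have hd2' : (2:ℝ) ≤ d := by exact_mod_cast hd2
      have hexp : (1 + hh mm)^d ≤ 2 := by
        have h4 : (1 + hh mm) ≤ Real.exp (hh mm) := by
          have := Real.add_one_le_exp (hh mm); linarith
        have h5 : (1 + hh mm)^d ≤ Real.exp (hh mm) ^ d :=
          pow_le_pow_left₀ (by linarith) h4 d
        have h6 : Real.exp (hh mm) ^ d = Real.exp (d * hh mm) := (Real.exp_nat_mul _ d).symm
        have h7 : (d:ℝ) * hh mm ≤ 1/2 := by linarith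
        have h8 : Real.exp ((d:ℝ) * hh mm) ≤ Real.exp (1/2) := Real.exp_le_exp.2 h7
        have h9 : Real.exp (1/2) ≤ 2 := by
          have e1 : Real.exp (1/2) * Real.exp (1/2) = Real.exp 1 := by
            rw [← Real.exp_add]; norm_num
          nlinarith [Real.exp_one_lt_d9, Real.exp_pos (1/2)]
        rw [h6] at h5
        linarith
      have hpc : ∀ i : Fin d, |(g x - g y) i| ≤ 6 * (d * lpNorm p (x - y)) := by
        intro i
        have hth : 2*(i.1:ℝ)*hh mm ≤ 1 := by
          have hi : (i.1:ℝ) ≤ d := by exact_mod_cast le_of_lt i.2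
          nlinarith [hhpos]
        have hR3 := Yf_lip hhpos hh1 h3 (habs x hx) (habs y hy) i.1 hth
        have hpow : (1 + hh mm)^(i.1) ≤ 2 :=
          le_trans (pow_le_pow_right₀ (by linarith) (le_of_lt i.2)) hexp
        have hsub : ∑ j ∈ Finset.range (i.1+1), |extf d x j - extf d y j|
            ≤ ∑ j ∈ Finset.range d, |extf d x j - extf d y j| :=
          Finset.sum_le_sum_of_subset_of_nonneg (Finset.range_subset_range.2 i.2)
            (fun j _ _ => abs_nonneg _)
        have hSnn : (0:ℝ) ≤ ∑ j ∈ Finset.range (i.1+1), |extf d x j - extf d y j| :=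
          Finset.sum_nonneg (fun j _ => abs_nonneg _)
        have e1 : (g x - g y) i = Yf mm (hh mm) (extf d x) i.1 - Yf mm (hh mm) (extf d y) i.1 := by
          show g x i - g y i = _
          rw [hgdef]
        rw [e1]
        have hpownn : (0:ℝ) ≤ (1 + hh mm)^(i.1) := by positivity
        calc |Yf mm (hh mm) (extf d x) i.1 - Yf mm (hh mm) (extf d y) i.1|
            ≤ 3*(1 + hh mm)^(i.1) * ∑ j ∈ Finset.range (i.1+1), |extf d x j - extf d y j| := hR3
          _ ≤ 6 * ∑ j ∈ Finset.range d, |extf d x j - extf d y j| := by nlinarith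
          _ ≤ 6 * (d * lpNorm p (x - y)) := by nlinarith
      have hN := lpNorm_le hp hd1 _ (by nlinarith : (0:ℝ) ≤ 6 * (d * lpNorm p (x - y))) hpc
      have hsplit : (d:ℝ)^((7:ℝ)/2) = (d:ℝ)^((2:ℕ):ℝ) * (d:ℝ)^((3:ℝ)/2) := by
        rw [← Real.rpow_add hdpos]; norm_num
      have h2deq : (d:ℝ)^((2:ℕ):ℝ) = (d:ℝ)^(2:ℕ) := Real.rpow_natCast _ 2
      have h32d : (2:ℝ) ≤ (d:ℝ)^((3:ℝ)/2) := by
        calc (2:ℝ) ≤ (d:ℝ) := hd2'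
          _ = (d:ℝ)^(1:ℝ) := (Real.rpow_one _).symm
          _ ≤ (d:ℝ)^((3:ℝ)/2) := Real.rpow_le_rpow_of_exponent_le hdR (by norm_num)
      have hkey2 : 6*(d:ℝ)^(2:ℕ) ≤ Real.sqrt 32 * (d:ℝ)^((7:ℝ)/2) := by
        have step : 5 * ((d:ℝ)^(2:ℕ) * 2) ≤ Real.sqrt 32 * ((d:ℝ)^(2:ℕ) * (d:ℝ)^((3:ℝ)/2)) := by
          apply mul_le_mul h32 _ (by positivity) (Real.sqrt_nonneg 32)
          exact mul_le_mul_of_nonneg_left h32d (by positivity)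
        calc 6*(d:ℝ)^(2:ℕ) ≤ 5 * ((d:ℝ)^(2:ℕ) * 2) := by nlinarith [sq_nonneg (d:ℝ)]
          _ ≤ Real.sqrt 32 * ((d:ℝ)^(2:ℕ) * (d:ℝ)^((3:ℝ)/2)) := step
          _ = Real.sqrt 32 * (d:ℝ)^((7:ℝ)/2) := by rw [hsplit, h2deq]
      calc lpNorm p (g x - g y) ≤ (d:ℝ) * (6 * (d * lpNorm p (x - y))) := hN
        _ = 6*(d:ℝ)^(2:ℕ) * lpNorm p (x - y) := by ring
        _ ≤ (Real.sqrt 32 * (d:ℝ)^((7:ℝ)/2)) * lpNorm p (x - y) :=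
            mul_le_mul_of_nonneg_right hkey2 hlpnn
  -- conclude
  have hmem : (((Net d mm).params : ℝ≥0∞)) ∈ { N : ℝ≥0∞ | ∃ Φ : DNN,
      ∃ gg : (Fin d → ℝ) → (Fin d → ℝ), Φ.Realizes gg ∧ N = (Φ.params : ℝ≥0∞) ∧
      (∀ x ∈ cube d (-1) 1,
        lpNorm p (gg x - (fun y (i : Fin d) => ∏ j ∈ Finset.Iic i, y j) x) ≤ ε) ∧
      (∀ x ∈ cube d (-1) 1, ∀ y ∈ cube d (-1) 1,
        lpNorm p (gg x - gg y)
          ≤ (Real.sqrt 32 * (d:ℝ)^((7:ℝ)/2)) * lpNorm p (x - y)) } :=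
    ⟨Net d mm, g, hreal, rfl, herr, hlip⟩
  refine le_trans (sInf_le hmem) ?_
  -- parameter count
  have hnat := params_le d mm hd1
  have hK0r : (K0:ℝ) ≤ 2*ε⁻¹ := by
    have h1 := Nat.ceil_lt_add_one (le_of_lt (inv_pos.2 hε))
    rw [← hK0def] at h1
    linarith
  have hmmr : (mm:ℝ) ≤ 12*(d:ℝ)^(2:ℕ)*ε⁻¹ := by
    have : (mm:ℝ) = 6*(d:ℝ)^(2:ℕ)*(K0:ℝ) := by rw [hmmdef]; push_cast; ring
    rw [this]
    nlinarith [sq_nonneg (d:ℝ)]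
  have hrealP : ((Net d mm).params : ℝ) ≤ 306*(d:ℝ)^(306:ℕ)*ε⁻¹ := by
    have hcast : ((Net d mm).params : ℝ) ≤ 2*(d:ℝ) * ((2*(d:ℝ)+4*(mm:ℝ)+1) * (2*(d:ℝ)+1)) := by
      have := hnat
      have h2 : ((Net d mm).params : ℝ) ≤ ((2*d * ((2*d+4*mm+1) * (2*d+1)) : ℕ) : ℝ) := by
        exact_mod_cast this
      push_cast at h2
      linarith
    have hX : 2*(d:ℝ)+4*(mm:ℝ)+1 ≤ 51*(d:ℝ)^(2:ℕ)*ε⁻¹ := by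
      have h1 : (d:ℝ) ≤ (d:ℝ)^(2:ℕ) := by nlinarith
      have h2 : (d:ℝ)^(2:ℕ) ≤ (d:ℝ)^(2:ℕ)*ε⁻¹ := by nlinarith [sq_nonneg (d:ℝ)]
      nlinarith [hmmr]
    have hY : 2*(d:ℝ)+1 ≤ 3*(d:ℝ) := by linarith
    have hXnn : (0:ℝ) ≤ 2*(d:ℝ)+4*(mm:ℝ)+1 := by positivity
    have hd4 : (d:ℝ)^(4:ℕ) ≤ (d:ℝ)^(306:ℕ) := pow_le_pow_right₀ hdR (by norm_num)
    calc ((Net d mm).params : ℝ)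
        ≤ 2*(d:ℝ) * ((2*(d:ℝ)+4*(mm:ℝ)+1) * (2*(d:ℝ)+1)) := hcast
      _ ≤ 2*(d:ℝ) * ((51*(d:ℝ)^(2:ℕ)*ε⁻¹) * (3*(d:ℝ))) := by
          apply mul_le_mul_of_nonneg_left _ (by positivity)
          apply mul_le_mul hX hY (by positivity) (by positivity)
      _ = 306*(d:ℝ)^(4:ℕ)*ε⁻¹ := by ring
      _ ≤ 306*(d:ℝ)^(306:ℕ)*ε⁻¹ := by nlinarith [hd4]
  calc (((Net d mm).params : ℝ≥0∞))
      = ENNReal.ofReal ((Net d mm).params : ℝ) := (ENNReal.ofReal_natCast _).symm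
    _ ≤ ENNReal.ofReal (((306:ℕ):ℝ) * (d:ℝ)^(306:ℕ) * ε⁻¹) := by
        apply ENNReal.ofReal_le_ofReal
        push_cast
        exact hrealP

end
end

section
/- Lemma 3.9 (approximation of the product function with Lipschitz constant 1 on [−1/8,1/8]^d): There exists a constant K ∈ ℕ which satisfies for all d ∈ ℕ, p ∈ [1,∞], ε ∈ (0,1] that Cost_p(p_d|_{[−1/8,1/8]^d}, 1, ε) ≤ K·d⁴·(1 + ln(ε^{−1})). -/
open scoped BigOperators ENNReal

noncomputable section

namespace L39

noncomputable def saw (t : ℝ) : ℝ := 2*t - 4 * max (t - 1/2) 0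

noncomputable def Fk : ℕ → ℝ → ℝ
  | 0, t => t
  | (k+1), t => t - saw t / 2 + Fk k (saw t) / 4

lemma saw_nonneg {t : ℝ} (h0 : 0 ≤ t) (h1 : t ≤ 1) : 0 ≤ saw t := by
  rcases le_total t (1/2) with h | h
  · rw [saw, max_eq_right (by linarith)]; linarith
  · rw [saw, max_eq_left (by linarith)]; linarith

lemma saw_le_one {t : ℝ} (h0 : 0 ≤ t) (h1 : t ≤ 1) : saw t ≤ 1 := by
  rcases le_total t (1/2) with h | h
  · rw [saw, max_eq_right (by linarith)]; linarith
  · rw [saw, max_eq_left (by linarith)]; linarith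

lemma sawIter_nonneg {t : ℝ} (h0 : 0 ≤ t) (h1 : t ≤ 1) (j : ℕ) :
    0 ≤ saw^[j] t ∧ saw^[j] t ≤ 1 := by
  induction j generalizing t with
  | zero => exact ⟨h0, h1⟩
  | succ j ih =>
      rw [Function.iterate_succ_apply]
      exact ih (saw_nonneg h0 h1) (saw_le_one h0 h1)

lemma abs_sub' (a b : ℝ) : |a - b| ≤ |a| + |b| := by
  rw [sub_eq_add_neg]
  exact (abs_add_le _ _).trans (by rw [abs_neg])

lemma Fk_succ (k : ℕ) (t : ℝ) :
    Fk (k+1) t = Fk k t - saw^[k+1] t / 4^(k+1) := by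
  induction k generalizing t with
  | zero => simp [Fk]; ring
  | succ k ih =>
      have h1 : Fk (k+1+1) t = t - saw t / 2 + Fk (k+1) (saw t) / 4 := rfl
      have h2 : Fk (k+1) t = t - saw t / 2 + Fk k (saw t) / 4 := rfl
      have h3 : saw^[k+1+1] t = saw^[k+1] (saw t) := Function.iterate_succ_apply saw (k+1) t
      rw [h1, ih (saw t), h2, h3]
      ring

lemma keyid {t : ℝ} (h0 : 0 ≤ t) (h1 : t ≤ 1) :
    t - saw t/2 + (saw t)^2/4 - t^2 = 0 := by
  rcases le_total t (1/2) with h | h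
  · rw [saw, max_eq_right (by linarith)]; ring
  · rw [saw, max_eq_left (by linarith)]; ring

lemma Fk_err {t : ℝ} (h0 : 0 ≤ t) (h1 : t ≤ 1) (k : ℕ) :
    t^2 ≤ Fk k t ∧ Fk k t ≤ t^2 + (1/4)^(k+1) := by
  induction k generalizing t with
  | zero =>
      simp only [Fk]
      norm_num
      constructor
      · nlinarith
      · nlinarith [sq_nonneg (t - 1/2)]
  | succ k ih =>
      have hs0 := saw_nonneg h0 h1
      have hs1 := saw_le_one h0 h1
      obtain ⟨a, b⟩ := ih hs0 hs1
      have hk := keyid h0 h1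
      show t^2 ≤ t - saw t/2 + Fk k (saw t)/4 ∧
        t - saw t/2 + Fk k (saw t)/4 ≤ t^2 + (1/4)^(k+2)
      constructor
      · nlinarith
      · have : ((1:ℝ)/4)^(k+2) = (1/4)^(k+1)/4 := by ring
        nlinarith

lemma Fk_sandwich (k : ℕ) : ∀ x y : ℝ, 0 ≤ x → x ≤ y → y ≤ 1 →
    (x + y - (1/2)^k) * (y - x) ≤ Fk k y - Fk k x ∧
    Fk k y - Fk k x ≤ (x + y + (1/2)^k) * (y - x) := by
  induction k with
  | zero =>
      intro x y hx hxy hy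
      simp only [Fk, pow_zero]
      constructor <;> nlinarith
  | succ k ih =>
      have low : ∀ x y : ℝ, 0 ≤ x → x ≤ y → y ≤ 1/2 →
          (x + y - (1/2)^(k+1)) * (y - x) ≤ Fk (k+1) y - Fk (k+1) x ∧
          Fk (k+1) y - Fk (k+1) x ≤ (x + y + (1/2)^(k+1)) * (y - x) := by
        intro x y hx hxy hy
        have hsx : saw x = 2*x := by rw [saw, max_eq_right (by linarith)]; ring
        have hsy : saw y = 2*y := by rw [saw, max_eq_right (by linarith)]; ring
        have h2 := ih (2*x) (2*y) (by linarith) (by linarith) (by linarith)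
        have hp : ((1:ℝ)/2)^(k+1) = (1/2)^k/2 := by ring
        simp only [Fk]
        rw [hsx, hsy, hp]
        constructor <;> nlinarith [h2.1, h2.2]
      have high : ∀ x y : ℝ, 1/2 ≤ x → x ≤ y → y ≤ 1 →
          (x + y - (1/2)^(k+1)) * (y - x) ≤ Fk (k+1) y - Fk (k+1) x ∧
          Fk (k+1) y - Fk (k+1) x ≤ (x + y + (1/2)^(k+1)) * (y - x) := by
        intro x y hx hxy hy
        have hsx : saw x = 2 - 2*x := by rw [saw, max_eq_left (by linarith)]; ring
        have hsy : saw y = 2 - 2*y := by rw [saw, max_eq_left (by linarith)]; ring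
        have h2 := ih (2 - 2*y) (2 - 2*x) (by linarith) (by linarith) (by linarith)
        have hp : ((1:ℝ)/2)^(k+1) = (1/2)^k/2 := by ring
        simp only [Fk]
        rw [hsx, hsy, hp]
        constructor <;> nlinarith [h2.1, h2.2]
      intro x y hx hxy hy
      rcases le_total y (1/2) with h | h
      · exact low x y hx hxy h
      rcases le_total (1/2) x with h' | h'
      · exact high x y h' hxy hy
      · have h1 := low x (1/2) hx h' (le_refl _)
        have h2 := high (1/2) y (le_refl _) h hy
        constructor <;> nlinarith [h1.1, h1.2, h2.1, h2.2]

lemma Fk_lip {k : ℕ} (hk : 2 ≤ k) {x y : ℝ} (hx0 : 0 ≤ x) (hx1 : x ≤ 1/4)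
    (hy0 : 0 ≤ y) (hy1 : y ≤ 1/4) : |Fk k x - Fk k y| ≤ (3/4) * |x - y| := by
  have hpow : ((1:ℝ)/2)^k ≤ (1/2)^2 :=
    pow_le_pow_of_le_one (by norm_num) (by norm_num) hk
  have key : ∀ a b : ℝ, 0 ≤ a → a ≤ b → b ≤ 1/4 →
      |Fk k b - Fk k a| ≤ (3/4) * |b - a| := by
    intro a b ha hab hb
    have h := Fk_sandwich k a b ha hab (by linarith)
    have hpnn : (0:ℝ) ≤ (1/2)^k := by positivity
    rw [abs_of_nonneg (by linarith : (0:ℝ) ≤ b - a), abs_le]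
    constructor <;> nlinarith [h.1, h.2]
  rcases le_total x y with h | h
  · rw [abs_sub_comm, abs_sub_comm x y]; exact key x y hx0 h hy1
  · exact key y x hy0 h hx1

lemma Fk_nonneg {t : ℝ} (h0 : 0 ≤ t) (h1 : t ≤ 1) (k : ℕ) : 0 ≤ Fk k t := by
  have := (Fk_err h0 h1 k).1; nlinarith

noncomputable def mulA (k : ℕ) (a b : ℝ) : ℝ := (Fk k |a+b| - Fk k |a-b|)/4

lemma mulA_err {k : ℕ} {a b : ℝ} (ha : |a| ≤ 1/8) (hb : |b| ≤ 1/8) :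
    |mulA k a b - a*b| ≤ (1/4)^(k+1)/2 := by
  have h1 : |a+b| ≤ 1/4 := by
    have := abs_add_le a b; linarith
  have h2 : |a-b| ≤ 1/4 := by
    have := abs_sub' a b; linarith
  have e1 := Fk_err (abs_nonneg (a+b)) (by linarith) k
  have e2 := Fk_err (abs_nonneg (a-b)) (by linarith) k
  have s1 : |a+b|^2 = (a+b)^2 := sq_abs _
  have s2 : |a-b|^2 = (a-b)^2 := sq_abs _
  rw [mulA, abs_le]
  constructor <;> nlinarith [e1.1, e1.2, e2.1, e2.2]

lemma mulA_bound {k : ℕ} (hk : 2 ≤ k) {a b : ℝ} (ha : |a| ≤ 1/8) (hb : |b| ≤ 1/8) :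
    |mulA k a b| ≤ 1/8 := by
  have he := mulA_err (k := k) ha hb
  have hab : |a*b| ≤ 1/64 := by
    rw [abs_mul]
    calc |a| * |b| ≤ (1/8) * (1/8) :=
      mul_le_mul ha hb (abs_nonneg b) (by norm_num)
    _ = 1/64 := by norm_num
  have hp : ((1:ℝ)/4)^(k+1) ≤ (1/4)^3 :=
    pow_le_pow_of_le_one (by norm_num) (by norm_num) (by omega)
  calc |mulA k a b| ≤ |mulA k a b - a*b| + |a*b| := by
        have := abs_add_le (mulA k a b - a*b) (a*b); simpa using this
  _ ≤ 1/8 := by norm_num at hp hab ⊢; linarith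

lemma mulA_lip {k : ℕ} (hk : 2 ≤ k) {a b a' b' : ℝ} (ha : |a| ≤ 1/8) (hb : |b| ≤ 1/8)
    (ha' : |a'| ≤ 1/8) (hb' : |b'| ≤ 1/8) :
    |mulA k a b - mulA k a' b'| ≤ (3/8) * (|a - a'| + |b - b'|) := by
  have bnd : ∀ u v : ℝ, |u| ≤ 1/8 → |v| ≤ 1/8 → |u+v| ≤ 1/4 := by
    intro u v hu hv
    calc |u+v| ≤ |u| + |v| := abs_add_le u v
    _ ≤ 1/4 := by linarith
  have h1 : abs (Fk k |a+b| - Fk k |a'+b'|) ≤ (3/4) * (|a - a'| + |b - b'|) := by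
    have := Fk_lip hk (abs_nonneg (a+b)) (bnd a b ha hb) (abs_nonneg (a'+b'))
      (bnd a' b' ha' hb')
    have h3 : abs (|a+b| - |a'+b'|) ≤ |a - a'| + |b - b'| := by
      have t1 : abs (|a+b| - |a'+b'|) ≤ |(a+b) - (a'+b')| := abs_abs_sub_abs_le_abs_sub _ _
      have t2 : (a+b) - (a'+b') = (a-a') + (b-b') := by ring
      have t3 : |(a-a') + (b-b')| ≤ |a-a'| + |b-b'| := abs_add_le _ _
      rw [t2] at t1; linarith
    nlinarith [abs_nonneg (|a+b| - |a'+b'|)]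
  have h2 : abs (Fk k |a-b| - Fk k |a'-b'|) ≤ (3/4) * (|a - a'| + |b - b'|) := by
    have hb2 : |-b| ≤ 1/8 := by rwa [abs_neg]
    have hb2' : |-b'| ≤ 1/8 := by rwa [abs_neg]
    have := Fk_lip hk (abs_nonneg (a-b)) (by simpa [sub_eq_add_neg] using bnd a (-b) ha hb2)
      (abs_nonneg (a'-b')) (by simpa [sub_eq_add_neg] using bnd a' (-b') ha' hb2')
    have h3 : abs (|a-b| - |a'-b'|) ≤ |a - a'| + |b - b'| := by
      have t1 : abs (|a-b| - |a'-b'|) ≤ |(a-b) - (a'-b')| := abs_abs_sub_abs_le_abs_sub _ _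
      have t2 : (a-b) - (a'-b') = (a-a') - (b-b') := by ring
      have t3 : |(a-a') - (b-b')| ≤ |a-a'| + |b-b'| := abs_sub' _ _
      rw [t2] at t1; linarith
    nlinarith [abs_nonneg (|a-b| - |a'-b'|)]
  rw [mulA, mulA]
  have expand : (Fk k |a+b| - Fk k |a-b|)/4 - (Fk k |a'+b'| - Fk k |a'-b'|)/4
      = ((Fk k |a+b| - Fk k |a'+b'|) - (Fk k |a-b| - Fk k |a'-b'|))/4 := by ring
  rw [expand, abs_div]
  have := abs_sub' (Fk k |a+b| - Fk k |a'+b'|) (Fk k |a-b| - Fk k |a'-b'|)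
  rw [abs_of_nonneg (by norm_num : (0:ℝ) ≤ 4)]
  linarith

noncomputable def chain (k : ℕ) (x : ℕ → ℝ) : ℕ → ℝ
  | 0 => x 0
  | (j+1) => mulA k (chain k x j) (x (j+1))

lemma chain_bound {k : ℕ} (hk : 2 ≤ k) {x : ℕ → ℝ} (hx : ∀ i, |x i| ≤ 1/8) :
    ∀ j, |chain k x j| ≤ 1/8 := by
  intro j
  induction j with
  | zero => exact hx 0
  | succ j ih => exact mulA_bound hk ih (hx (j+1))

lemma chain_err {k : ℕ} (hk : 2 ≤ k) {x : ℕ → ℝ} (hx : ∀ i, |x i| ≤ 1/8) :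
    ∀ j, |chain k x j - ∏ i ∈ Finset.range (j+1), x i| ≤ (1/4)^(k+1) := by
  intro j
  induction j with
  | zero => simp [chain]
  | succ j ih =>
      rw [Finset.prod_range_succ]
      have hc := chain_bound hk hx j
      have he := mulA_err (k := k) hc (hx (j+1))
      have key : |chain k x (j+1) - (∏ i ∈ Finset.range (j+1), x i) * x (j+1)|
          ≤ |mulA k (chain k x j) (x (j+1)) - chain k x j * x (j+1)|
            + |x (j+1)| * |chain k x j - ∏ i ∈ Finset.range (j+1), x i| := by
        show |mulA k (chain k x j) (x (j+1)) - _| ≤ _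
        have : mulA k (chain k x j) (x (j+1)) - (∏ i ∈ Finset.range (j+1), x i) * x (j+1)
            = (mulA k (chain k x j) (x (j+1)) - chain k x j * x (j+1))
              + (x (j+1)) * (chain k x j - ∏ i ∈ Finset.range (j+1), x i) := by ring
        rw [this]
        calc _ ≤ _ := abs_add_le _ _
        _ = _ := by rw [abs_mul]
      have hx1 := hx (j+1)
      have h8 : |x (j+1)| * |chain k x j - ∏ i ∈ Finset.range (j+1), x i|
          ≤ (1/8) * (1/4)^(k+1) := by
        apply mul_le_mul hx1 ih (abs_nonneg _) (by norm_num)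
      have hp : (0:ℝ) < (1/4)^(k+1) := by positivity
      calc |chain k x (j+1) - (∏ i ∈ Finset.range (j+1), x i) * x (j+1)| ≤ _ := key
      _ ≤ (1/4)^(k+1)/2 + (1/8) * (1/4)^(k+1) := by linarith
      _ ≤ (1/4)^(k+1) := by linarith

lemma chain_lip {k : ℕ} (hk : 2 ≤ k) {x y : ℕ → ℝ} (hx : ∀ i, |x i| ≤ 1/8)
    (hy : ∀ i, |y i| ≤ 1/8) {M : ℝ} (hM : ∀ i, |x i - y i| ≤ M) :
    ∀ j, |chain k x j - chain k y j| ≤ M := by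
  have hM0 : 0 ≤ M := le_trans (abs_nonneg _) (hM 0)
  intro j
  induction j with
  | zero => exact hM 0
  | succ j ih =>
      have := mulA_lip hk (chain_bound hk hx j) (hx (j+1)) (chain_bound hk hy j) (hy (j+1))
      have h2 := hM (j+1)
      calc |chain k x (j+1) - chain k y (j+1)| ≤
          (3/8) * (|chain k x j - chain k y j| + |x (j+1) - y (j+1)|) := this
      _ ≤ (3/8) * (M + M) := by nlinarith
      _ ≤ M := by linarith

def get {m : ℕ} (x : Fin m → ℝ) (j : ℕ) : ℝ := if h : j < m then x ⟨j, h⟩ else 0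

lemma sum_ind {m : ℕ} (p : ℕ) (y : Fin m → ℝ) :
    ∑ j : Fin m, (if (j : ℕ) = p then (1:ℝ) else 0) * y j = get y p := by
  by_cases h : p < m
  · rw [get, dif_pos h]
    rw [Finset.sum_eq_single (⟨p, h⟩ : Fin m)]
    · simp
    · intro b _ hb
      rw [if_neg, zero_mul]
      exact fun hh => hb (Fin.ext hh)
    · simp
  · rw [get, dif_neg h]
    apply Finset.sum_eq_zero
    intro j _
    rw [if_neg, zero_mul]
    intro hh
    exact h (hh ▸ j.2)

structure RowSpec where
  c1 : ℝ
  p1 : ℕ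
  c2 : ℝ
  p2 : ℕ
  c3 : ℝ
  p3 : ℕ
  bb : ℝ

noncomputable def RowSpec.eval (r : RowSpec) (g : ℕ → ℝ) : ℝ :=
  r.c1 * g r.p1 + r.c2 * g r.p2 + r.c3 * g r.p3 + r.bb

def zRow : RowSpec := ⟨0,0,0,0,0,0,0⟩
def cpRow (j : ℕ) : RowSpec := ⟨1,j,0,0,0,0,0⟩

noncomputable def rowOf (d k t i : ℕ) : RowSpec :=
  if t = 0 then (if i < d then ⟨1,i,0,0,0,0,1/8⟩ else zRow)
  else if t = 1 + (d-1)*(k+3) then (if i = 0 then ⟨1,0,0,0,0,0,-(1/8)⟩ else zRow)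
  else if (t-1) % (k+3) = 0 then
      (if i = 0 then ⟨1,0,1,1,0,0,-(1/4)⟩
      else if i = 1 then ⟨-1,0,-1,1,0,0,1/4⟩
      else if i = 2 then ⟨1,0,-1,1,0,0,0⟩
      else if i = 3 then ⟨-1,0,1,1,0,0,0⟩
      else cpRow (i-2))
  else if (t-1) % (k+3) = 1 then
      (if i = 0 then ⟨1,0,1,1,0,0,0⟩
      else if i = 1 then ⟨1,0,1,1,0,0,-(1/2)⟩
      else if i = 2 then ⟨1,0,1,1,0,0,0⟩
      else if i = 3 then ⟨1,2,1,3,0,0,0⟩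
      else if i = 4 then ⟨1,2,1,3,0,0,-(1/2)⟩
      else if i = 5 then ⟨1,2,1,3,0,0,0⟩
      else cpRow (i-2))
  else if (t-1) % (k+3) = k+2 then
      (if i = 0 then ⟨1/4,2,-(1/4),5,0,0,1/8⟩
      else cpRow (i+5))
  else
      (if i = 0 then ⟨2,0,-4,1,0,0,0⟩
      else if i = 1 then ⟨2,0,-4,1,0,0,-(1/2)⟩
      else if i = 2 then ⟨1,2,-(2/4^((t-1) % (k+3) - 1)),0,4/4^((t-1) % (k+3) - 1),1,0⟩
      else if i = 3 then ⟨2,3,-4,4,0,0,0⟩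
      else if i = 4 then ⟨2,3,-4,4,0,0,-(1/2)⟩
      else if i = 5 then ⟨1,5,-(2/4^((t-1) % (k+3) - 1)),3,4/4^((t-1) % (k+3) - 1),4,0⟩
      else cpRow i)

def LL (d k : ℕ) : ℕ := 1 + (d-1)*(k+3)
def wid (d : ℕ) : ℕ := d + 6
def lay (d k : ℕ) : ℕ → ℕ := fun t => if t = 0 then d else if t = LL d k + 1 then 1 else wid d

noncomputable def net (d k : ℕ) : DNN where
  L := LL d k
  ℓ := lay d k
  W := fun t => Matrix.of fun i j =>
    (rowOf d k t i.1).c1 * (if (j : ℕ) = (rowOf d k t i.1).p1 then 1 else 0)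
    + (rowOf d k t i.1).c2 * (if (j : ℕ) = (rowOf d k t i.1).p2 then 1 else 0)
    + (rowOf d k t i.1).c3 * (if (j : ℕ) = (rowOf d k t i.1).p3 then 1 else 0)
  b := fun t i => (rowOf d k t i.1).bb

lemma affine_eval (d k t : ℕ) (y : Fin ((net d k).ℓ t) → ℝ) (i : Fin ((net d k).ℓ (t+1))) :
    DNN.affine (net d k) t y i = (rowOf d k t i.1).eval (get y) := by
  show (∑ j, _) + _ = _
  have : ∀ j : Fin ((net d k).ℓ t), (net d k).W t i j * y j
      = (rowOf d k t i.1).c1 * ((if (j : ℕ) = (rowOf d k t i.1).p1 then (1:ℝ) else 0) * y j)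
      + (rowOf d k t i.1).c2 * ((if (j : ℕ) = (rowOf d k t i.1).p2 then (1:ℝ) else 0) * y j)
      + (rowOf d k t i.1).c3 * ((if (j : ℕ) = (rowOf d k t i.1).p3 then (1:ℝ) else 0) * y j) := by
    intro j
    show ((rowOf d k t i.1).c1 * _ + (rowOf d k t i.1).c2 * _ + (rowOf d k t i.1).c3 * _) * y j = _
    ring
  rw [Finset.sum_congr rfl (fun j _ => this j)]
  rw [Finset.sum_add_distrib, Finset.sum_add_distrib, ← Finset.mul_sum, ← Finset.mul_sum,
    ← Finset.mul_sum, sum_ind, sum_ind, sum_ind]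
  rfl

lemma hidden_step (d k t : ℕ) (z : Fin ((net d k).ℓ 0) → ℝ) (i : Fin ((net d k).ℓ (t+1))) :
    DNN.hidden (net d k) (t+1) z i
      = max ((rowOf d k t i.1).eval (get (DNN.hidden (net d k) t z))) 0 := by
  show max (DNN.affine (net d k) t (DNN.hidden (net d k) t z) i) 0 = _
  rw [affine_eval]

lemma get_hidden_succ (d k t : ℕ) (z : Fin ((net d k).ℓ 0) → ℝ) (i : ℕ)
    (hi : i < (net d k).ℓ (t+1)) :
    get (DNN.hidden (net d k) (t+1) z) i
      = max ((rowOf d k t i).eval (get (DNN.hidden (net d k) t z))) 0 := by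
  rw [get, dif_pos hi]
  exact hidden_step d k t z ⟨i, hi⟩

noncomputable def ES (d k : ℕ) (x : ℕ → ℝ) (s : ℕ) : ℕ → ℝ := fun i =>
  if i = 0 then chain k x s + 1/8
  else if i + s ≤ d - 1 then x (s+i) + 1/8 else 0

noncomputable def SA (k d : ℕ) (x : ℕ → ℝ) (s : ℕ) : ℕ → ℝ := fun i =>
  if i = 0 then max (chain k x s + x (s+1)) 0
  else if i = 1 then max (-(chain k x s + x (s+1))) 0
  else if i = 2 then max (chain k x s - x (s+1)) 0
  else if i = 3 then max (x (s+1) - chain k x s) 0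
  else if 4 ≤ i ∧ i + s ≤ d + 1 then x (s + i - 2) + 1/8 else 0

noncomputable def SC (k d : ℕ) (x : ℕ → ℝ) (s j : ℕ) : ℕ → ℝ := fun i =>
  if i = 0 then saw^[j] |chain k x s + x (s+1)|
  else if i = 1 then max (saw^[j] |chain k x s + x (s+1)| - 1/2) 0
  else if i = 2 then Fk j |chain k x s + x (s+1)|
  else if i = 3 then saw^[j] |chain k x s - x (s+1)|
  else if i = 4 then max (saw^[j] |chain k x s - x (s+1)| - 1/2) 0
  else if i = 5 then Fk j |chain k x s - x (s+1)|
  else if 6 ≤ i ∧ i + s ≤ d + 3 then x (s + i - 4) + 1/8 else 0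

lemma max_add_max_neg (z : ℝ) : max z 0 + max (-z) 0 = |z| := by
  rcases le_total z 0 with h | h
  · rw [max_eq_right h, max_eq_left (by linarith), abs_of_nonpos h]; ring
  · rw [max_eq_left h, max_eq_right (by linarith), abs_of_nonneg h]; ring

lemma eval_mk (c1 c2 c3 bb : ℝ) (p1 p2 p3 : ℕ) (g : ℕ → ℝ) :
    RowSpec.eval ⟨c1,p1,c2,p2,c3,p3,bb⟩ g = c1 * g p1 + c2 * g p2 + c3 * g p3 + bb := rfl

lemma eval_cp (j : ℕ) (g : ℕ → ℝ) : RowSpec.eval (cpRow j) g = g j := by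
  show 1 * g j + 0 * g 0 + 0 * g 0 + 0 = g j
  ring

lemma eval_z (g : ℕ → ℝ) : RowSpec.eval zRow g = 0 := by
  show 0 * g 0 + 0 * g 0 + 0 * g 0 + 0 = 0
  ring

section Rows

variable (d k t i : ℕ)

lemma rowInit (h0 : t = 0) :
    rowOf d k t i = if i < d then ⟨1,i,0,0,0,0,1/8⟩ else zRow := by
  simp only [rowOf, if_pos h0]

lemma rowOut (hL : t = 1 + (d-1)*(k+3)) (h0 : t ≠ 0) :
    rowOf d k t i = if i = 0 then ⟨1,0,0,0,0,0,-(1/8)⟩ else zRow := by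
  simp only [rowOf]
  rw [if_neg h0, if_pos hL]

lemma rowA (h0 : t ≠ 0) (hL : t ≠ 1 + (d-1)*(k+3)) (hm : (t-1) % (k+3) = 0) :
    rowOf d k t i =
      if i = 0 then ⟨1,0,1,1,0,0,-(1/4)⟩
      else if i = 1 then ⟨-1,0,-1,1,0,0,1/4⟩
      else if i = 2 then ⟨1,0,-1,1,0,0,0⟩
      else if i = 3 then ⟨-1,0,1,1,0,0,0⟩
      else cpRow (i-2) := by
  simp only [rowOf]
  rw [if_neg h0, if_neg hL, if_pos hm]

lemma rowB (h0 : t ≠ 0) (hL : t ≠ 1 + (d-1)*(k+3)) (hm : (t-1) % (k+3) = 1) :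
    rowOf d k t i =
      if i = 0 then ⟨1,0,1,1,0,0,0⟩
      else if i = 1 then ⟨1,0,1,1,0,0,-(1/2)⟩
      else if i = 2 then ⟨1,0,1,1,0,0,0⟩
      else if i = 3 then ⟨1,2,1,3,0,0,0⟩
      else if i = 4 then ⟨1,2,1,3,0,0,-(1/2)⟩
      else if i = 5 then ⟨1,2,1,3,0,0,0⟩
      else cpRow (i-2) := by
  simp only [rowOf]
  rw [if_neg h0, if_neg hL, if_neg (by omega), if_pos hm]

lemma rowC (j : ℕ) (h0 : t ≠ 0) (hL : t ≠ 1 + (d-1)*(k+3)) (hm : (t-1) % (k+3) = j+2)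
    (hjk : j + 2 < k + 2) :
    rowOf d k t i =
      if i = 0 then ⟨2,0,-4,1,0,0,0⟩
      else if i = 1 then ⟨2,0,-4,1,0,0,-(1/2)⟩
      else if i = 2 then ⟨1,2,-(2/4^(j+1)),0,4/4^(j+1),1,0⟩
      else if i = 3 then ⟨2,3,-4,4,0,0,0⟩
      else if i = 4 then ⟨2,3,-4,4,0,0,-(1/2)⟩
      else if i = 5 then ⟨1,5,-(2/4^(j+1)),3,4/4^(j+1),4,0⟩
      else cpRow i := by
  simp only [rowOf]
  rw [if_neg h0, if_neg hL, if_neg (by omega), if_neg (by omega), if_neg (by omega), hm]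
  norm_num

lemma rowD (h0 : t ≠ 0) (hL : t ≠ 1 + (d-1)*(k+3)) (hm : (t-1) % (k+3) = k+2) :
    rowOf d k t i =
      if i = 0 then ⟨1/4,2,-(1/4),5,0,0,1/8⟩
      else cpRow (i+5) := by
  simp only [rowOf]
  rw [if_neg h0, if_neg hL, if_neg (by omega), if_neg (by omega), if_pos hm]

end Rows

section Trans

variable (d k : ℕ) (x : ℕ → ℝ)

lemma lay_mid' (t : ℕ) (h0 : t ≠ 0) (hL : t ≠ 1 + (d-1)*(k+3) + 1) :
    (net d k).ℓ t = wid d := by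
  show lay d k t = wid d
  rw [lay, if_neg h0, if_neg (by simpa [LL] using hL)]

lemma ES0 (s : ℕ) : ES d k x s 0 = chain k x s + 1/8 := by
  norm_num [ES]

lemma ES1 (s : ℕ) (hs : s + 2 ≤ d) : ES d k x s 1 = x (s+1) + 1/8 := by
  simp only [ES]
  norm_num
  intro h
  exact absurd h (by omega)

lemma SA0 (s : ℕ) : SA k d x s 0 = max (chain k x s + x (s+1)) 0 := by
  norm_num [SA]

lemma SA1 (s : ℕ) : SA k d x s 1 = max (-(chain k x s + x (s+1))) 0 := by
  norm_num [SA]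

lemma SA2 (s : ℕ) : SA k d x s 2 = max (chain k x s - x (s+1)) 0 := by
  norm_num [SA]

lemma SA3 (s : ℕ) : SA k d x s 3 = max (x (s+1) - chain k x s) 0 := by
  norm_num [SA]

lemma SC0 (s j : ℕ) : SC k d x s j 0 = saw^[j] |chain k x s + x (s+1)| := by
  norm_num [SC]

lemma SC1 (s j : ℕ) : SC k d x s j 1 = max (saw^[j] |chain k x s + x (s+1)| - 1/2) 0 := by
  norm_num [SC]

lemma SC2 (s j : ℕ) : SC k d x s j 2 = Fk j |chain k x s + x (s+1)| := by
  norm_num [SC]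

lemma SC3 (s j : ℕ) : SC k d x s j 3 = saw^[j] |chain k x s - x (s+1)| := by
  norm_num [SC]

lemma SC4 (s j : ℕ) : SC k d x s j 4 = max (saw^[j] |chain k x s - x (s+1)| - 1/2) 0 := by
  norm_num [SC]

lemma SC5 (s j : ℕ) : SC k d x s j 5 = Fk j |chain k x s - x (s+1)| := by
  norm_num [SC]

lemma T1 (hx : ∀ i, |x i| ≤ 1/8) (s : ℕ) (hs : s + 2 ≤ d) (t : ℕ) (ht0 : t ≠ 0)
    (htL : t ≠ 1 + (d-1)*(k+3)) (htm : (t-1) % (k+3) = 0)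
    (ht1 : t + 1 ≠ 1 + (d-1)*(k+3) + 1)
    (z : Fin ((net d k).ℓ 0) → ℝ)
    (hz : ∀ i, get (DNN.hidden (net d k) t z) i = ES d k x s i) :
    ∀ i, get (DNN.hidden (net d k) (t+1) z) i = SA k d x s i := by
  have hg : get (DNN.hidden (net d k) t z) = ES d k x s := funext hz
  have hxy : ∀ n, (0:ℝ) ≤ x n + 1/8 := by
    intro n; have := abs_le.mp (hx n); linarith
  intro i
  by_cases hiw : i < wid d
  · have hlay : i < (net d k).ℓ (t+1) := by rw [lay_mid' d k (t+1) (by omega) ht1]; exact hiw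
    rw [get_hidden_succ d k t z i hlay, hg, rowA d k t i ht0 htL htm]
    by_cases h_0 : i = 0
    · subst h_0
      rw [if_pos rfl, eval_mk, ES0, ES1 d k x s hs, SA0]
      congr 1; ring
    · by_cases h_1 : i = 1
      · subst h_1
        rw [if_neg (by omega), if_pos rfl, eval_mk, ES0, ES1 d k x s hs, SA1]
        congr 1; ring
      · by_cases h_2 : i = 2
        · subst h_2
          rw [if_neg (by omega), if_neg (by omega), if_pos rfl, eval_mk, ES0,
            ES1 d k x s hs, SA2]
          congr 1; ring
        · by_cases h_3 : i = 3
          · subst h_3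
            rw [if_neg (by omega), if_neg (by omega), if_neg (by omega), if_pos rfl,
              eval_mk, ES0, ES1 d k x s hs, SA3]
            congr 1; ring
          · rw [if_neg h_0, if_neg h_1, if_neg h_2, if_neg h_3, eval_cp]
            simp only [ES, SA]
            rw [if_neg (by omega : ¬ (i - 2 = 0)), if_neg h_0, if_neg h_1, if_neg h_2,
              if_neg h_3]
            by_cases hc : i - 2 + s ≤ d - 1
            · rw [if_pos hc, if_pos (by omega : 4 ≤ i ∧ i + s ≤ d + 1)]
              have hrw : s + (i - 2) = s + i - 2 := by omega
              rw [hrw]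
              exact max_eq_left (hxy _)
            · rw [if_neg hc, if_neg (by omega : ¬ (4 ≤ i ∧ i + s ≤ d + 1))]
              exact max_self 0
  · have hlay : ¬ i < (net d k).ℓ (t+1) := by
      rw [lay_mid' d k (t+1) (by omega) ht1]; exact hiw
    rw [get, dif_neg hlay]
    rw [wid] at hiw
    simp only [SA]
    rw [if_neg (by omega), if_neg (by omega), if_neg (by omega), if_neg (by omega),
      if_neg (by omega : ¬ (4 ≤ i ∧ i + s ≤ d + 1))]

lemma T2 (hx : ∀ i, |x i| ≤ 1/8) (s : ℕ) (t : ℕ) (ht0 : t ≠ 0)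
    (htL : t ≠ 1 + (d-1)*(k+3)) (htm : (t-1) % (k+3) = 1)
    (ht1 : t + 1 ≠ 1 + (d-1)*(k+3) + 1)
    (z : Fin ((net d k).ℓ 0) → ℝ)
    (hz : ∀ i, get (DNN.hidden (net d k) t z) i = SA k d x s i) :
    ∀ i, get (DNN.hidden (net d k) (t+1) z) i = SC k d x s 0 i := by
  have hg : get (DNN.hidden (net d k) t z) = SA k d x s := funext hz
  have hxy : ∀ n, (0:ℝ) ≤ x n + 1/8 := by
    intro n; have := abs_le.mp (hx n); linarith
  have habsp : max (chain k x s + x (s+1)) 0 + max (-(chain k x s + x (s+1))) 0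
      = |chain k x s + x (s+1)| := max_add_max_neg _
  have habsm : max (chain k x s - x (s+1)) 0 + max (x (s+1) - chain k x s) 0
      = |chain k x s - x (s+1)| := by
    rw [← max_add_max_neg (chain k x s - x (s+1)), neg_sub]
  intro i
  by_cases hiw : i < wid d
  · have hlay : i < (net d k).ℓ (t+1) := by rw [lay_mid' d k (t+1) (by omega) ht1]; exact hiw
    rw [get_hidden_succ d k t z i hlay, hg, rowB d k t i ht0 htL htm]
    by_cases h_0 : i = 0
    · subst h_0
      rw [if_pos rfl, eval_mk, SA0, SA1, SC0, Function.iterate_zero_apply]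
      have : (1:ℝ) * max (chain k x s + x (s+1)) 0 + 1 * max (-(chain k x s + x (s+1))) 0
          + 0 * max (chain k x s + x (s+1)) 0 + 0 = |chain k x s + x (s+1)| := by
        rw [← habsp]; ring
      rw [this]
      exact max_eq_left (abs_nonneg _)
    · by_cases h_1 : i = 1
      · subst h_1
        rw [if_neg (by omega), if_pos rfl, eval_mk, SA0, SA1, SC1,
          Function.iterate_zero_apply]
        congr 1
        rw [← habsp]; ring
      · by_cases h_2 : i = 2
        · subst h_2
          rw [if_neg (by omega), if_neg (by omega), if_pos rfl, eval_mk, SA0, SA1, SC2]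
          have : (1:ℝ) * max (chain k x s + x (s+1)) 0 + 1 * max (-(chain k x s + x (s+1))) 0
              + 0 * max (chain k x s + x (s+1)) 0 + 0 = |chain k x s + x (s+1)| := by
            rw [← habsp]; ring
          rw [this]
          rw [max_eq_left (abs_nonneg _)]
          rfl
        · by_cases h_3 : i = 3
          · subst h_3
            rw [if_neg (by omega), if_neg (by omega), if_neg (by omega), if_pos rfl,
              eval_mk, SA2, SA3, SA0, SC3, Function.iterate_zero_apply]
            have : (1:ℝ) * max (chain k x s - x (s+1)) 0 + 1 * max (x (s+1) - chain k x s) 0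
                + 0 * max (chain k x s + x (s+1)) 0 + 0 = |chain k x s - x (s+1)| := by
              rw [← habsm]; ring
            rw [this]
            exact max_eq_left (abs_nonneg _)
          · by_cases h_4 : i = 4
            · subst h_4
              rw [if_neg (by omega), if_neg (by omega), if_neg (by omega), if_neg (by omega),
                if_pos rfl, eval_mk, SA2, SA3, SA0, SC4, Function.iterate_zero_apply]
              congr 1
              rw [← habsm]; ring
            · by_cases h_5 : i = 5
              · subst h_5
                rw [if_neg (by omega), if_neg (by omega), if_neg (by omega),
                  if_neg (by omega), if_neg (by omega), if_pos rfl, eval_mk, SA2, SA3, SA0, SC5]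
                have : (1:ℝ) * max (chain k x s - x (s+1)) 0
                    + 1 * max (x (s+1) - chain k x s) 0
                    + 0 * max (chain k x s + x (s+1)) 0 + 0
                    = |chain k x s - x (s+1)| := by
                  rw [← habsm]; ring
                rw [this, max_eq_left (abs_nonneg _)]
                rfl
              · rw [if_neg h_0, if_neg h_1, if_neg h_2, if_neg h_3, if_neg h_4, if_neg h_5,
                  eval_cp]
                simp only [SA, SC]
                rw [if_neg (by omega : ¬ (i-2 = 0)), if_neg (by omega : ¬ (i-2 = 1)),
                  if_neg (by omega : ¬ (i-2 = 2)), if_neg (by omega : ¬ (i-2 = 3)),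
                  if_neg h_0, if_neg h_1, if_neg h_2, if_neg h_3, if_neg h_4, if_neg h_5]
                by_cases hc : 4 ≤ i - 2 ∧ i - 2 + s ≤ d + 1
                · rw [if_pos hc, if_pos (by omega : 6 ≤ i ∧ i + s ≤ d + 3)]
                  have hrw : s + (i - 2) - 2 = s + i - 4 := by omega
                  rw [hrw]
                  exact max_eq_left (hxy _)
                · rw [if_neg hc, if_neg (by omega : ¬ (6 ≤ i ∧ i + s ≤ d + 3))]
                  exact max_self 0
  · have hlay : ¬ i < (net d k).ℓ (t+1) := by
      rw [lay_mid' d k (t+1) (by omega) ht1]; exact hiw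
    rw [get, dif_neg hlay]
    rw [wid] at hiw
    simp only [SC]
    rw [if_neg (by omega), if_neg (by omega), if_neg (by omega), if_neg (by omega),
      if_neg (by omega), if_neg (by omega), if_neg (by omega : ¬ (6 ≤ i ∧ i + s ≤ d + 3))]

lemma T3 (hx : ∀ i, |x i| ≤ 1/8) (hk : 2 ≤ k) (s j : ℕ) (hj : j < k) (t : ℕ) (ht0 : t ≠ 0)
    (htL : t ≠ 1 + (d-1)*(k+3)) (htm : (t-1) % (k+3) = j + 2)
    (ht1 : t + 1 ≠ 1 + (d-1)*(k+3) + 1)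
    (z : Fin ((net d k).ℓ 0) → ℝ)
    (hz : ∀ i, get (DNN.hidden (net d k) t z) i = SC k d x s j i) :
    ∀ i, get (DNN.hidden (net d k) (t+1) z) i = SC k d x s (j+1) i := by
  have hg : get (DNN.hidden (net d k) t z) = SC k d x s j := funext hz
  have hxy : ∀ n, (0:ℝ) ≤ x n + 1/8 := by
    intro n; have := abs_le.mp (hx n); linarith
  have hc := chain_bound hk hx s
  have hX := hx (s+1)
  have hu0 : (0:ℝ) ≤ |chain k x s + x (s+1)| := abs_nonneg _
  have hu1 : |chain k x s + x (s+1)| ≤ 1 := by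
    have := abs_add_le (chain k x s) (x (s+1)); linarith
  have hv0 : (0:ℝ) ≤ |chain k x s - x (s+1)| := abs_nonneg _
  have hv1 : |chain k x s - x (s+1)| ≤ 1 := by
    have := abs_sub' (chain k x s) (x (s+1)); linarith
  intro i
  by_cases hiw : i < wid d
  · have hlay : i < (net d k).ℓ (t+1) := by rw [lay_mid' d k (t+1) (by omega) ht1]; exact hiw
    rw [get_hidden_succ d k t z i hlay, hg, rowC d k t i j ht0 htL htm (by omega)]
    by_cases h_0 : i = 0
    · subst h_0
      rw [if_pos rfl, eval_mk, SC0, SC1]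
      have hid : (2:ℝ) * saw^[j] |chain k x s + x (s+1)|
          + (-4) * max (saw^[j] |chain k x s + x (s+1)| - 1/2) 0
          + 0 * saw^[j] |chain k x s + x (s+1)| + 0
          = saw^[j+1] |chain k x s + x (s+1)| := by
        rw [Function.iterate_succ_apply', saw]; ring
      rw [hid, SC0 d k x s (j+1)]
      exact max_eq_left (sawIter_nonneg hu0 hu1 (j+1)).1
    · by_cases h_1 : i = 1
      · subst h_1
        rw [if_neg (by omega), if_pos rfl, eval_mk, SC0, SC1,
          SC1 d k x s (j+1)]
        congr 1
        rw [Function.iterate_succ_apply', saw]; ring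
      · by_cases h_2 : i = 2
        · subst h_2
          rw [if_neg (by omega), if_neg (by omega), if_pos rfl, eval_mk, SC2, SC0, SC1]
          have hid : (1:ℝ) * Fk j |chain k x s + x (s+1)|
              + -(2/4^(j+1)) * saw^[j] |chain k x s + x (s+1)|
              + 4/4^(j+1) * max (saw^[j] |chain k x s + x (s+1)| - 1/2) 0 + 0
              = Fk (j+1) |chain k x s + x (s+1)| := by
            rw [Fk_succ, Function.iterate_succ_apply', saw]
            have h4 : (4:ℝ)^(j+1) ≠ 0 := by positivity
            field_simp
            ring
          rw [hid, SC2 d k x s (j+1)]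
          exact max_eq_left (Fk_nonneg hu0 hu1 (j+1))
        · by_cases h_3 : i = 3
          · subst h_3
            rw [if_neg (by omega), if_neg (by omega), if_neg (by omega), if_pos rfl,
              eval_mk, SC3, SC4, SC0]
            have hid : (2:ℝ) * saw^[j] |chain k x s - x (s+1)|
                + (-4) * max (saw^[j] |chain k x s - x (s+1)| - 1/2) 0
                + 0 * saw^[j] |chain k x s + x (s+1)| + 0
                = saw^[j+1] |chain k x s - x (s+1)| := by
              rw [Function.iterate_succ_apply', saw]; ring
            rw [hid, SC3 d k x s (j+1)]
            exact max_eq_left (sawIter_nonneg hv0 hv1 (j+1)).1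
          · by_cases h_4 : i = 4
            · subst h_4
              rw [if_neg (by omega), if_neg (by omega), if_neg (by omega), if_neg (by omega),
                if_pos rfl, eval_mk, SC3, SC4, SC4 d k x s (j+1)]
              congr 1
              rw [Function.iterate_succ_apply', saw]; ring
            · by_cases h_5 : i = 5
              · subst h_5
                rw [if_neg (by omega), if_neg (by omega), if_neg (by omega),
                  if_neg (by omega), if_neg (by omega), if_pos rfl, eval_mk, SC5, SC3, SC4]
                have hid : (1:ℝ) * Fk j |chain k x s - x (s+1)|
                    + -(2/4^(j+1)) * saw^[j] |chain k x s - x (s+1)|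
                    + 4/4^(j+1) * max (saw^[j] |chain k x s - x (s+1)| - 1/2) 0 + 0
                    = Fk (j+1) |chain k x s - x (s+1)| := by
                  rw [Fk_succ, Function.iterate_succ_apply', saw]
                  have h4 : (4:ℝ)^(j+1) ≠ 0 := by positivity
                  field_simp
                  ring
                rw [hid, SC5 d k x s (j+1)]
                exact max_eq_left (Fk_nonneg hv0 hv1 (j+1))
              · rw [if_neg h_0, if_neg h_1, if_neg h_2, if_neg h_3, if_neg h_4, if_neg h_5,
                  eval_cp]
                have hsrc : SC k d x s j i
                    = (if 6 ≤ i ∧ i + s ≤ d + 3 then x (s + i - 4) + 1/8 else 0) := by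
                  simp only [SC]
                  rw [if_neg h_0, if_neg h_1, if_neg h_2, if_neg h_3, if_neg h_4, if_neg h_5]
                have htgt : SC k d x s (j+1) i
                    = (if 6 ≤ i ∧ i + s ≤ d + 3 then x (s + i - 4) + 1/8 else 0) := by
                  simp only [SC]
                  rw [if_neg h_0, if_neg h_1, if_neg h_2, if_neg h_3, if_neg h_4, if_neg h_5]
                rw [hsrc, htgt]
                by_cases hc6 : 6 ≤ i ∧ i + s ≤ d + 3
                · rw [if_pos hc6]
                  exact max_eq_left (hxy _)
                · rw [if_neg hc6]
                  exact max_self (0:ℝ)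
  · have hlay : ¬ i < (net d k).ℓ (t+1) := by
      rw [lay_mid' d k (t+1) (by omega) ht1]; exact hiw
    rw [get, dif_neg hlay]
    rw [wid] at hiw
    simp only [SC]
    rw [if_neg (by omega), if_neg (by omega), if_neg (by omega), if_neg (by omega),
      if_neg (by omega), if_neg (by omega), if_neg (by omega : ¬ (6 ≤ i ∧ i + s ≤ d + 3))]

lemma T4 (hx : ∀ i, |x i| ≤ 1/8) (hk : 2 ≤ k) (s : ℕ) (hs : s + 2 ≤ d) (t : ℕ) (ht0 : t ≠ 0)
    (htL : t ≠ 1 + (d-1)*(k+3)) (htm : (t-1) % (k+3) = k + 2)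
    (ht1 : t + 1 ≠ 1 + (d-1)*(k+3) + 1)
    (z : Fin ((net d k).ℓ 0) → ℝ)
    (hz : ∀ i, get (DNN.hidden (net d k) t z) i = SC k d x s k i) :
    ∀ i, get (DNN.hidden (net d k) (t+1) z) i = ES d k x (s+1) i := by
  have hg : get (DNN.hidden (net d k) t z) = SC k d x s k := funext hz
  have hxy : ∀ n, (0:ℝ) ≤ x n + 1/8 := by
    intro n; have := abs_le.mp (hx n); linarith
  have hmb := mulA_bound hk (chain_bound hk hx s) (hx (s+1))
  intro i
  by_cases hiw : i < wid d
  · have hlay : i < (net d k).ℓ (t+1) := by rw [lay_mid' d k (t+1) (by omega) ht1]; exact hiw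
    rw [get_hidden_succ d k t z i hlay, hg, rowD d k t i ht0 htL htm]
    by_cases h_0 : i = 0
    · subst h_0
      rw [if_pos rfl, eval_mk, SC2, SC5, SC0]
      have hid : (1/4:ℝ) * Fk k |chain k x s + x (s+1)|
          + -(1/4) * Fk k |chain k x s - x (s+1)|
          + 0 * saw^[k] |chain k x s + x (s+1)| + 1/8
          = mulA k (chain k x s) (x (s+1)) + 1/8 := by
        rw [mulA]; ring
      rw [hid]
      have hch : mulA k (chain k x s) (x (s+1)) = chain k x (s+1) := rfl
      rw [hch, ES0]
      apply max_eq_left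
      have := abs_le.mp (chain_bound hk hx (s+1))
      linarith
    · rw [if_neg h_0, eval_cp]
      simp only [SC, ES]
      rw [if_neg (by omega : ¬ (i+5 = 0)), if_neg (by omega : ¬ (i+5 = 1)),
        if_neg (by omega : ¬ (i+5 = 2)), if_neg (by omega : ¬ (i+5 = 3)),
        if_neg (by omega : ¬ (i+5 = 4)), if_neg (by omega : ¬ (i+5 = 5)), if_neg h_0]
      by_cases hcc : i + (s+1) ≤ d - 1
      · rw [if_pos (by omega : 6 ≤ i+5 ∧ i+5+s ≤ d+3), if_pos hcc]
        have hrw : s + (i+5) - 4 = s + 1 + i := by omega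
        rw [hrw]
        exact max_eq_left (hxy _)
      · rw [if_neg (by omega : ¬ (6 ≤ i+5 ∧ i+5+s ≤ d+3)), if_neg hcc]
        exact max_self 0
  · have hlay : ¬ i < (net d k).ℓ (t+1) := by
      rw [lay_mid' d k (t+1) (by omega) ht1]; exact hiw
    rw [get, dif_neg hlay]
    rw [wid] at hiw
    simp only [ES]
    rw [if_neg (by omega), if_neg (by omega : ¬ (i + (s+1) ≤ d - 1))]

lemma stage_step (hk : 2 ≤ k) (hx : ∀ i, |x i| ≤ 1/8) (s : ℕ) (hs : s + 2 ≤ d)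
    (z : Fin ((net d k).ℓ 0) → ℝ)
    (hz : ∀ i, get (DNN.hidden (net d k) (1 + s*(k+3)) z) i = ES d k x s i) :
    ∀ i, get (DNN.hidden (net d k) (1 + (s+1)*(k+3)) z) i = ES d k x (s+1) i := by
  have fact : ∀ r, r < k+3 → (1 + s*(k+3) + r ≠ 0) ∧ (1 + s*(k+3) + r ≠ 1 + (d-1)*(k+3)) ∧
      ((1 + s*(k+3) + r - 1) % (k+3) = r) ∧
      (1 + s*(k+3) + r + 1 ≠ 1 + (d-1)*(k+3) + 1) := by
    intro r hr
    have hmul : s*(k+3) + (k+3) ≤ (d-1)*(k+3) := by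
      have h2 : s + 1 ≤ d - 1 := by omega
      calc s*(k+3) + (k+3) = (s+1)*(k+3) := by ring
      _ ≤ (d-1)*(k+3) := Nat.mul_le_mul_right _ h2
    have hmod : (1 + s*(k+3) + r - 1) % (k+3) = r := by
      have h3 : 1 + s*(k+3) + r - 1 = (k+3)*s + r := by
        rw [Nat.mul_comm (k+3) s]; omega
      rw [h3, Nat.mul_add_mod, Nat.mod_eq_of_lt hr]
    exact ⟨by omega, by omega, hmod, by omega⟩
  have f0 := fact 0 (by omega)
  rw [Nat.add_zero] at f0
  have h1 := T1 d k x hx s hs (1 + s*(k+3)) f0.1 f0.2.1 f0.2.2.1 f0.2.2.2 z hz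
  have f1 := fact 1 (by omega)
  have h2 := T2 d k x hx s (1 + s*(k+3) + 1) f1.1 f1.2.1 f1.2.2.1 f1.2.2.2 z h1
  have hC : ∀ j, j ≤ k → ∀ i,
      get (DNN.hidden (net d k) (1 + s*(k+3) + (j+2)) z) i = SC k d x s j i := by
    intro j
    induction j with
    | zero =>
        intro _
        have e : 1 + s*(k+3) + (0+2) = 1 + s*(k+3) + 1 + 1 := by omega
        rw [e]
        exact h2
    | succ j ih =>
        intro hjk
        have fj := fact (j+2) (by omega)
        have h3 := T3 d k x hx hk s j (by omega) (1 + s*(k+3) + (j+2)) fj.1 fj.2.1 fj.2.2.1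
          fj.2.2.2 z (ih (by omega))
        have e : 1 + s*(k+3) + (j+1+2) = 1 + s*(k+3) + (j+2) + 1 := by omega
        rw [e]
        exact h3
  have fk4 := fact (k+2) (by omega)
  have e2 : 1 + s*(k+3) + (k+2) = 1 + s*(k+3) + (k+2) := rfl
  have h4 := T4 d k x hx hk s hs (1 + s*(k+3) + (k+2)) fk4.1 fk4.2.1 fk4.2.2.1 fk4.2.2.2 z
    (hC k (le_refl _))
  have e3 : 1 + (s+1)*(k+3) = 1 + s*(k+3) + (k+2) + 1 := by ring
  rw [e3]
  exact h4

lemma stageInv (hk : 2 ≤ k) (hd : 1 ≤ d) (z : Fin ((net d k).ℓ 0) → ℝ)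
    (hx : ∀ i, |get z i| ≤ 1/8) :
    ∀ s, s ≤ d - 1 → ∀ i,
      get (DNN.hidden (net d k) (1 + s*(k+3)) z) i = ES d k (get z) s i := by
  have hxy : ∀ n, (0:ℝ) ≤ get z n + 1/8 := by
    intro n; have := abs_le.mp (hx n); linarith
  intro s
  induction s with
  | zero =>
      intro _ i
      have h1 : (1:ℕ) + 0*(k+3) = 0 + 1 := by ring
      rw [h1]
      by_cases hiw : i < wid d
      · have hlay : i < (net d k).ℓ (0+1) := by
          rw [lay_mid' d k (0+1) (by omega) (by omega)]
          exact hiw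
        rw [get_hidden_succ d k 0 z i hlay]
        have hid : get (DNN.hidden (net d k) 0 z) = get z := rfl
        rw [hid, rowInit d k 0 i rfl]
        by_cases hid2 : i < d
        · rw [if_pos hid2, eval_mk]
          have hval : (1:ℝ) * get z i + 0 * get z 0 + 0 * get z 0 + 1/8
              = get z i + 1/8 := by ring
          rw [hval, max_eq_left (hxy i)]
          simp only [ES]
          by_cases h_0 : i = 0
          · subst h_0
            rw [if_pos rfl]
            simp only [chain]
          · rw [if_neg h_0, if_pos (by omega : i + 0 ≤ d - 1)]
            have : (0:ℕ) + i = i := by omega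
            rw [this]
        · rw [if_neg hid2, eval_z, max_self]
          simp only [ES]
          rw [if_neg (by omega), if_neg (by omega : ¬ (i + 0 ≤ d - 1))]
      · have hlay : ¬ i < (net d k).ℓ (0+1) := by
          rw [lay_mid' d k (0+1) (by omega) (by omega)]
          exact hiw
        rw [get, dif_neg hlay]
        rw [wid] at hiw
        simp only [ES]
        rw [if_neg (by omega), if_neg (by omega : ¬ (i + 0 ≤ d - 1))]
  | succ s ih =>
      intro hs i
      exact stage_step d k (get z) hk hx s (by omega) z (ih (by omega)) i

lemma net_realize (hk : 2 ≤ k) (hd : 1 ≤ d) (z : Fin ((net d k).ℓ 0) → ℝ)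
    (hx : ∀ i, |get z i| ≤ 1/8) (i : Fin ((net d k).ℓ ((net d k).L + 1))) :
    DNN.realize (net d k) z i = chain k (get z) (d-1) := by
  have hs := stageInv d k hk hd z hx (d-1) (le_refl _)
  have hg : get (DNN.hidden (net d k) (1 + (d-1)*(k+3)) z) = ES d k (get z) (d-1) :=
    funext hs
  have hone : (net d k).ℓ ((net d k).L + 1) = 1 := by
    show lay d k (LL d k + 1) = 1
    rw [lay, if_neg (by simp only [LL]; omega), if_pos rfl]
  have hi0 : i.1 = 0 := by have := i.2; omega
  show DNN.affine (net d k) (net d k).L (DNN.hidden (net d k) (net d k).L z) i = _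
  rw [affine_eval]
  show (rowOf d k (1 + (d-1)*(k+3)) i.1).eval
      (get (DNN.hidden (net d k) (1 + (d-1)*(k+3)) z)) = _
  rw [hg, rowOut d k (1 + (d-1)*(k+3)) i.1 rfl (by omega), if_pos hi0, eval_mk, ES0]
  ring

end Trans

lemma lay_le (d k t : ℕ) : lay d k t ≤ wid d := by
  rw [lay, wid]
  split_ifs <;> omega

lemma net_params_le (d k : ℕ) :
    (net d k).params ≤ (LL d k + 1) * (wid d * (wid d + 1)) := by
  have h0 : (net d k).params
      = ∑ t ∈ Finset.range (LL d k + 1), lay d k (t+1) * (lay d k t + 1) := rfl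
  rw [h0]
  calc ∑ t ∈ Finset.range (LL d k + 1), lay d k (t+1) * (lay d k t + 1)
      ≤ ∑ _t ∈ Finset.range (LL d k + 1), wid d * (wid d + 1) := by
        apply Finset.sum_le_sum
        intro t _
        exact Nat.mul_le_mul (lay_le d k (t+1)) (by have := lay_le d k t; omega)
  _ = (LL d k + 1) * (wid d * (wid d + 1)) := by
        rw [Finset.sum_const, Finset.card_range, smul_eq_mul]

lemma lpNorm_nonneg {n : ℕ} (p : ℝ≥0∞) (z : Fin n → ℝ) : 0 ≤ lpNorm p z := by
  rw [lpNorm]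
  split_ifs
  · exact Real.iSup_nonneg (fun i => abs_nonneg _)
  · positivity

lemma toReal_pos' {p : ℝ≥0∞} (hp : 1 ≤ p) (hne : ¬ p = ⊤) : 0 < p.toReal := by
  apply ENNReal.toReal_pos _ hne
  intro h
  rw [h] at hp
  simp at hp

lemma lpNorm_single (p : ℝ≥0∞) (hp : 1 ≤ p) (z : Fin 1 → ℝ) : lpNorm p z = |z 0| := by
  rw [lpNorm]
  split_ifs with h
  · refine le_antisymm (ciSup_le (fun i : Fin 1 => ?_))
      (le_ciSup (f := fun i : Fin 1 => |z i|) (Set.Finite.bddAbove (Set.finite_range _)) 0)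
    rw [Subsingleton.elim i 0]
  · have hq := toReal_pos' hp h
    rw [Fin.sum_univ_one, ← Real.rpow_mul (abs_nonneg _), mul_one_div_cancel hq.ne',
      Real.rpow_one]

lemma coord_le_lpNorm {n : ℕ} (p : ℝ≥0∞) (hp : 1 ≤ p) (z : Fin n → ℝ) (i : Fin n) :
    |z i| ≤ lpNorm p z := by
  rw [lpNorm]
  split_ifs with h
  · exact le_ciSup (f := fun j : Fin n => |z j|) (Set.Finite.bddAbove (Set.finite_range _)) i
  · have hq := toReal_pos' hp h
    have h1 : |z i| ^ p.toReal ≤ ∑ j, |z j| ^ p.toReal :=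
      Finset.single_le_sum (fun j _ => Real.rpow_nonneg (abs_nonneg _) _) (Finset.mem_univ i)
    have h2 : |z i| = (|z i| ^ p.toReal) ^ (1 / p.toReal) := by
      rw [← Real.rpow_mul (abs_nonneg _), mul_one_div_cancel hq.ne', Real.rpow_one]
    rw [h2]
    apply Real.rpow_le_rpow (Real.rpow_nonneg (abs_nonneg _) _) h1
    positivity

lemma prod_get {n : ℕ} (x : Fin n → ℝ) : ∏ i ∈ Finset.range n, get x i = ∏ i, x i := by
  rw [← Fin.prod_univ_eq_prod_range (fun i => get x i) n]
  apply Finset.prod_congr rfl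
  intro j _
  rw [get, dif_pos j.2]

lemma cost_le (d k : ℕ) (hk : 2 ≤ k) (hd : 0 < d) (p : ℝ≥0∞) (hp : 1 ≤ p) (ε : ℝ)
    (hε : (1/4:ℝ)^(k+1) ≤ ε) :
    Cost p (cube d (-(1/8)) (1/8)) (fun x (_ : Fin 1) => ∏ i, x i) 1 ε
      ≤ (((net d k).params : ℕ) : ℝ≥0∞) := by
  have hm : (net d k).ℓ 0 = d := by
    show lay d k 0 = d
    rw [lay, if_pos rfl]
  have hn1 : (net d k).ℓ ((net d k).L + 1) = 1 := by
    show lay d k (LL d k + 1) = 1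
    rw [lay, if_neg (by simp only [LL]; omega), if_pos rfl]
  have hbnds : ∀ x ∈ cube d (-(1/8)) (1/8), ∀ i, |get x i| ≤ 1/8 := by
    intro x hx i
    rw [get]
    split_ifs with h
    · exact abs_le.mpr ⟨hx.1 ⟨i,h⟩, hx.2 ⟨i,h⟩⟩
    · norm_num
  have hget : ∀ x : Fin d → ℝ, get (fun j => x (Fin.cast hm j)) = get x := by
    intro x
    funext j
    by_cases hj : j < d
    · rw [get, dif_pos (show j < (net d k).ℓ 0 by rw [hm]; exact hj), get, dif_pos hj]
      exact congrArg x (Fin.ext rfl)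
    · rw [get, dif_neg (show ¬ j < (net d k).ℓ 0 by rw [hm]; exact hj), get, dif_neg hj]
  have hgv : ∀ x ∈ cube d (-(1/8)) (1/8), ∀ i : Fin 1,
      DNN.realize (net d k) (fun j => x (Fin.cast hm j)) (Fin.cast hn1.symm i)
        = chain k (get x) (d-1) := by
    intro x hx i
    have hb : ∀ i, |get (fun j => x (Fin.cast hm j)) i| ≤ 1/8 := by
      rw [hget x]; exact hbnds x hx
    have := net_realize d k hk (by omega) (fun j => x (Fin.cast hm j)) hb (Fin.cast hn1.symm i)
    rw [hget x] at this
    exact this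
  refine sInf_le ⟨net d k, (fun x i => DNN.realize (net d k) (fun j => x (Fin.cast hm j))
    (Fin.cast hn1.symm i)), ⟨hm, hn1, fun x i => rfl⟩, rfl, ?_, ?_⟩
  · intro x hx
    rw [lpNorm_single p hp]
    have h0 : ((fun (x : Fin d → ℝ) (i : Fin 1) => DNN.realize (net d k)
        (fun j => x (Fin.cast hm j)) (Fin.cast hn1.symm i)) x
        - (fun x (_ : Fin 1) => ∏ i, x i) x) 0
        = DNN.realize (net d k) (fun j => x (Fin.cast hm j)) (Fin.cast hn1.symm 0)
          - ∏ i, x i := rfl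
    rw [h0, hgv x hx 0]
    have hce := chain_err hk (hbnds x hx) (d-1)
    rw [show d - 1 + 1 = d from by omega, prod_get] at hce
    exact le_trans hce hε
  · intro x hx y hy
    rw [one_mul, lpNorm_single p hp]
    have h0 : ((fun (x : Fin d → ℝ) (i : Fin 1) => DNN.realize (net d k)
        (fun j => x (Fin.cast hm j)) (Fin.cast hn1.symm i)) x
        - (fun (x : Fin d → ℝ) (i : Fin 1) => DNN.realize (net d k)
        (fun j => x (Fin.cast hm j)) (Fin.cast hn1.symm i)) y) 0
        = DNN.realize (net d k) (fun j => x (Fin.cast hm j)) (Fin.cast hn1.symm 0)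
          - DNN.realize (net d k) (fun j => y (Fin.cast hm j)) (Fin.cast hn1.symm 0) := rfl
    rw [h0, hgv x hx 0, hgv y hy 0]
    apply chain_lip hk (hbnds x hx) (hbnds y hy) _ (d-1)
    intro i
    by_cases hi : i < d
    · have he : get x i - get y i = (x - y) ⟨i, hi⟩ := by
        rw [get, dif_pos hi, get, dif_pos hi]
        rfl
      rw [he]
      exact coord_le_lpNorm p hp (x - y) ⟨i, hi⟩
    · rw [get, dif_neg hi, get, dif_neg hi]
      simpa using lpNorm_nonneg p (x - y)

lemma pow_quarter_le {ε : ℝ} (hε0 : 0 < ε) (hε1 : ε ≤ 1) :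
    (1/4:ℝ)^(2 + ⌈Real.log ε⁻¹⌉₊ + 1) ≤ ε := by
  set n := ⌈Real.log ε⁻¹⌉₊ with hn
  have hinv1 : (1:ℝ) ≤ ε⁻¹ := by
    simpa using one_div_le_one_div_of_le hε0 hε1
  have hεinv : ε⁻¹ ≤ (4:ℝ)^(n+3) := by
    have h1 : ε⁻¹ = Real.exp (Real.log ε⁻¹) := (Real.exp_log (by positivity)).symm
    have h2 : Real.log ε⁻¹ ≤ (n:ℝ) := Nat.le_ceil _
    have h3 : Real.exp (Real.log ε⁻¹) ≤ Real.exp (n:ℝ) := Real.exp_le_exp.mpr h2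
    have h4 : Real.exp ((n:ℝ)) = Real.exp 1 ^ n := by
      rw [← Real.exp_nat_mul, mul_one]
    have h5 : Real.exp 1 ^ n ≤ (4:ℝ)^n := by
      apply pow_le_pow_left₀ (Real.exp_pos 1).le
      have := Real.exp_one_lt_d9
      linarith
    have h6 : (4:ℝ)^n ≤ 4^(n+3) := pow_le_pow_right₀ (by norm_num) (by omega)
    calc ε⁻¹ = Real.exp (Real.log ε⁻¹) := h1
    _ ≤ Real.exp (n:ℝ) := h3
    _ = Real.exp 1 ^ n := h4
    _ ≤ (4:ℝ)^n := h5
    _ ≤ (4:ℝ)^(n+3) := h6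
  have h7 : (1/4:ℝ)^(2 + n + 1) = ((4:ℝ)^(n+3))⁻¹ := by
    rw [one_div, inv_pow, show 2 + n + 1 = n + 3 from by omega]
  rw [h7, ← inv_inv ε]
  exact inv_anti₀ (by positivity) hεinv

end L39

/-- **Lemma 3.9**: approximation of the product function on `[-1/8,1/8]^d` with
Lipschitz constant `1` at cost `≤ K d⁴ (1 + ln(ε⁻¹))`. -/
theorem product_approx_lipschitz_one :
    ∃ K : ℕ, 0 < K ∧
      ∀ d : ℕ, 0 < d → ∀ p : ℝ≥0∞, 1 ≤ p → ∀ ε : ℝ, 0 < ε → ε ≤ 1 →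
        Cost p (cube d (-(1 / 8)) (1 / 8)) (fun x (_ : Fin 1) => ∏ i, x i) 1 ε ≤
          ENNReal.ofReal ((K : ℝ) * (d : ℝ) ^ 4 * (1 + Real.log ε⁻¹)) := by
  refine ⟨448, by norm_num, ?_⟩
  intro d hd p hp ε hε0 hε1
  set n := ⌈Real.log ε⁻¹⌉₊ with hn
  have hcost := L39.cost_le d (2+n) (by omega) hd p hp ε (L39.pow_quarter_le hε0 hε1)
  refine le_trans hcost ?_
  have hL0 : 0 ≤ Real.log ε⁻¹ :=
    Real.log_nonneg (by simpa using one_div_le_one_div_of_le hε0 hε1)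
  have h2 : L39.LL d (2+n) + 1 ≤ d * (2+n+5) := by
    have h3 : (d-1)*((2+n)+3) ≤ (d-1)*((2+n)+5) := Nat.mul_le_mul_left _ (by omega)
    have h4 : d*((2+n)+5) = (d-1)*((2+n)+5) + ((2+n)+5) := by
      have hh : d = (d-1)+1 := by omega
      calc d*((2+n)+5) = ((d-1)+1)*((2+n)+5) := by rw [← hh]
      _ = (d-1)*((2+n)+5) + ((2+n)+5) := by ring
    simp only [L39.LL]
    omega
  have h5 : L39.wid d * (L39.wid d + 1) ≤ 56 * d^2 := by
    have he : L39.wid d * (L39.wid d + 1) = (d+6)*(d+7) := rfl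
    rw [he]
    calc (d+6)*(d+7) ≤ (7*d)*(8*d) := Nat.mul_le_mul (by omega) (by omega)
    _ = 56*d^2 := by ring
  have hnat : (L39.net d (2+n)).params ≤ 56 * (d^3 * (2+n+5)) := by
    calc (L39.net d (2+n)).params
        ≤ (L39.LL d (2+n) + 1) * (L39.wid d * (L39.wid d + 1)) := L39.net_params_le d (2+n)
    _ ≤ (d * (2+n+5)) * (56 * d^2) := Nat.mul_le_mul h2 h5
    _ = 56 * (d^3 * (2+n+5)) := by ring
  have hreal2 : ((L39.net d (2+n)).params : ℝ) ≤ 448 * (d:ℝ)^4 * (1 + Real.log ε⁻¹) := by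
    have hcast : ((L39.net d (2+n)).params : ℝ) ≤ 56 * ((d:ℝ)^3 * ((2+n+5 : ℕ) : ℝ)) := by
      have hc := Nat.cast_le (α := ℝ) |>.mpr hnat
      push_cast at hc ⊢
      linarith
    have hceil : ((n:ℕ):ℝ) < Real.log ε⁻¹ + 1 := by
      rw [hn]; exact Nat.ceil_lt_add_one hL0
    have hd1 : (1:ℝ) ≤ (d:ℝ) := by exact_mod_cast hd
    have hd34 : (d:ℝ)^3 ≤ (d:ℝ)^4 := pow_le_pow_right₀ hd1 (by omega)
    have hk8 : ((2+n+5:ℕ):ℝ) ≤ 8 * (1 + Real.log ε⁻¹) := by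
      push_cast
      linarith
    calc ((L39.net d (2+n)).params : ℝ) ≤ 56 * ((d:ℝ)^3 * ((2+n+5 : ℕ):ℝ)) := hcast
    _ ≤ 56 * ((d:ℝ)^4 * (8 * (1 + Real.log ε⁻¹))) := by
        apply mul_le_mul_of_nonneg_left _ (by norm_num)
        apply mul_le_mul hd34 hk8 (by positivity) (by positivity)
    _ = 448 * (d:ℝ)^4 * (1 + Real.log ε⁻¹) := by ring
  calc ((L39.net d (2+n)).params : ℝ≥0∞)
      = ENNReal.ofReal (((L39.net d (2+n)).params : ℝ)) := by
        rw [ENNReal.ofReal_natCast]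
  _ ≤ ENNReal.ofReal (448 * (d:ℝ)^4 * (1 + Real.log ε⁻¹)) :=
        ENNReal.ofReal_le_ofReal hreal2
  _ = ENNReal.ofReal (((448:ℕ):ℝ) * (d:ℝ)^4 * (1 + Real.log ε⁻¹)) := by norm_num


end
end

section
/- Lemma 3.11 (approximation of the maximum function with Lipschitz constant 1): There exists a constant K ∈ ℕ which satisfies for all d ∈ ℕ, every d-dimensional hypercube Q ⊆ ℝ^d, and all ε ∈ [0,∞), p ∈ [1,∞] that Cost_p(m_d|_Q, 1, ε) ≤ K·d². -/
open scoped BigOperators ENNReal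

noncomputable section

namespace MaxApprox

def nval (d k : ℕ) : ℕ := (d - 1) / 2 ^ k + 1

lemma nval_pos (d k : ℕ) : 0 < nval d k := Nat.succ_pos _

lemma nval_zero (d : ℕ) (hd : 0 < d) : nval d 0 = d := by
  unfold nval; simp; omega

lemma nval_one (d : ℕ) : nval d 1 = (d - 1) / 2 + 1 := by
  unfold nval; norm_num

lemma nval_succ (d k : ℕ) : nval d (k + 1) = (nval d k + 1) / 2 := by
  unfold nval
  rw [pow_succ, ← Nat.div_div_eq_div_mul]
  omega

lemma nval_le (d k : ℕ) (hd : 0 < d) : nval d k ≤ d := by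
  unfold nval
  have : (d - 1) / 2 ^ k ≤ d - 1 := Nat.div_le_self _ _
  omega

lemma half_lt (d k j : ℕ) (h : j < nval d (k + 1)) : 2 * j < nval d k := by
  rw [nval_succ] at h
  have := nval_pos d k
  omega

lemma d_le_nval_mul (d k : ℕ) (hd : 0 < d) : d ≤ nval d k * 2 ^ k := by
  unfold nval
  rw [add_mul, one_mul]
  have h1 := Nat.div_add_mod (d - 1) (2 ^ k)
  have h2 : (d - 1) % 2 ^ k < 2 ^ k := Nat.mod_lt _ (Nat.two_pow_pos k)
  have h3 : (d - 1) / 2 ^ k * 2 ^ k = 2 ^ k * ((d - 1) / 2 ^ k) := mul_comm _ _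
  omega

lemma nval_self (d : ℕ) (hd : 0 < d) : nval d d = 1 := by
  unfold nval
  have h : d - 1 < 2 ^ d := lt_of_le_of_lt (Nat.sub_le d 1) (Nat.lt_two_pow_self (n := d))
  rw [Nat.div_eq_of_lt h]

def ldim (d k : ℕ) : ℕ := if k = 0 then d else if k ≤ d then 2 * nval d k else 1

lemma ldim_zero (d : ℕ) : ldim d 0 = d := rfl

lemma ldim_mid (d k : ℕ) (h1 : 1 ≤ k) (h2 : k ≤ d) : ldim d k = 2 * nval d k := by
  unfold ldim; rw [if_neg (by omega), if_pos h2]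

lemma ldim_last (d : ℕ) : ldim d (d + 1) = 1 := by
  unfold ldim; rw [if_neg (by omega), if_neg (by omega)]

/-- weights of the max network, as a plain function of natural indices -/
def maxw (d k i j : ℕ) : ℝ :=
  if k = 0 then
    (if i % 2 = 0 then
      (if j = 2 * (i / 2) then 1 else 0)
        + (if 2 * (i / 2) + 1 < d then (if j = 2 * (i / 2) + 1 then -1 else 0) else 0)
     else (if 2 * (i / 2) + 1 < d then (if j = 2 * (i / 2) + 1 then 1 else 0) else 0))
  else if k < d then
    (if i % 2 = 0 then
      ((if j = 2 * (2 * (i / 2)) then 1 else 0) + (if j = 2 * (2 * (i / 2)) + 1 then 1 else 0))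
        + (if 2 * (i / 2) + 1 < nval d k then
             ((if j = 2 * (2 * (i / 2) + 1) then -1 else 0)
               + (if j = 2 * (2 * (i / 2) + 1) + 1 then -1 else 0)) else 0)
     else (if 2 * (i / 2) + 1 < nval d k then
             ((if j = 2 * (2 * (i / 2) + 1) then 1 else 0)
               + (if j = 2 * (2 * (i / 2) + 1) + 1 then 1 else 0)) else 0))
  else
    (if j = 0 then 1 else 0) + (if j = 1 then 1 else 0)

def maxb (d : ℕ) (a : ℝ) (k i : ℕ) : ℝ :=
  if k = 0 then
    (if i % 2 = 0 then (if 2 * (i / 2) + 1 < d then 0 else -a)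
     else (if 2 * (i / 2) + 1 < d then -a else 0))
  else if k < d then 0 else a

def maxDNN (d : ℕ) (a : ℝ) : DNN where
  L := d
  ℓ := ldim d
  W := fun k => Matrix.of fun i j => maxw d k i.1 j.1
  b := fun k i => maxb d a k i.1

def Xext (d : ℕ) (x : Fin d → ℝ) : ℕ → ℝ := fun t => if h : t < d then x ⟨t, h⟩ else 0

def Vval (d : ℕ) (a : ℝ) (x : Fin d → ℝ) : ℕ → ℕ → ℝ
  | 0 => fun j => Xext d x j - a
  | (k + 1) => fun j =>
      if 2 * j + 1 < nval d k then
        max (Vval d a x k (2 * j)) (Vval d a x k (2 * j + 1))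
      else Vval d a x k (2 * j)

lemma fin_sum_eq {n : ℕ} (F : ℕ → ℝ) (y : Fin n → ℝ) :
    (∑ j : Fin n, F j.1 * y j)
      = ∑ t ∈ Finset.range n, F t * (if h : t < n then y ⟨t, h⟩ else 0) := by
  rw [← Fin.sum_univ_eq_sum_range (fun t => F t * (if h : t < n then y ⟨t, h⟩ else 0)) n]
  apply Finset.sum_congr rfl
  intro j _
  rw [dif_pos j.2]

lemma sum_ite_mul {n t : ℕ} (ht : t < n) (c : ℝ) (Y : ℕ → ℝ) :
    (∑ s ∈ Finset.range n, (if s = t then c else 0) * Y s) = c * Y t := by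
  rw [Finset.sum_eq_single t]
  · rw [if_pos rfl]
  · intro s _ hs; rw [if_neg hs, zero_mul]
  · intro h; exact absurd (Finset.mem_range.2 ht) h

lemma affine_eq (d : ℕ) (a : ℝ) (k : ℕ) (u : Fin ((maxDNN d a).ℓ k) → ℝ)
    (i : Fin ((maxDNN d a).ℓ (k + 1))) :
    DNN.affine (maxDNN d a) k u i
      = (∑ t ∈ Finset.range (ldim d k),
          maxw d k i.1 t * (if h : t < ldim d k then u ⟨t, h⟩ else 0)) + maxb d a k i.1 := by
  show (∑ j, maxw d k i.1 j.1 * u j) + maxb d a k i.1 = _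
  rw [fin_sum_eq]
  rfl

lemma maxkey (A B : ℝ) : max (A - B) 0 + B = max A B := by
  rcases le_total A B with h | h
  · rw [max_eq_right (by linarith : A - B ≤ (0:ℝ)), max_eq_right h]; ring
  · rw [max_eq_left (by linarith : (0:ℝ) ≤ A - B), max_eq_left h]; ring

lemma maxkey2 (A B c : ℝ) : max (A - B) 0 + (B - c) = max (A - c) (B - c) := by
  rcases le_total A B with h | h
  · rw [max_eq_right (by linarith : A - B ≤ (0:ℝ)), max_eq_right (by linarith : A - c ≤ B - c)]
    ring
  · rw [max_eq_left (by linarith : (0:ℝ) ≤ A - B), max_eq_left (by linarith : B - c ≤ A - c)]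
    ring

lemma hidden_invariant (d : ℕ) (hd : 0 < d) (a : ℝ) (x : Fin d → ℝ) (hx : ∀ i, a ≤ x i) :
    ∀ k, 1 ≤ k → k ≤ d →
      (∀ i : Fin ((maxDNN d a).ℓ k), 0 ≤ DNN.hidden (maxDNN d a) k x i) ∧
      (∀ j, ∀ hj : 2 * j + 1 < (maxDNN d a).ℓ k,
        DNN.hidden (maxDNN d a) k x ⟨2 * j, by omega⟩
          + DNN.hidden (maxDNN d a) k x ⟨2 * j + 1, hj⟩ = Vval d a x k j) := by
  intro k
  induction k with
  | zero => omega
  | succ k ih =>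
    intro _ hk1
    constructor
    · intro i
      simp only [DNN.hidden]
      exact le_max_right _ _
    · intro j hj
      have hℓ : (maxDNN d a).ℓ (k + 1) = 2 * nval d (k + 1) :=
        ldim_mid d (k + 1) (by omega) hk1
      have hjlt : j < nval d (k + 1) := by omega
      have e1 : (2 * j) % 2 = 0 := by omega
      have e2 : (2 * j) / 2 = j := by omega
      have e3 : (2 * j + 1) % 2 = 1 := by omega
      have e4 : (2 * j + 1) / 2 = j := by omega
      rcases Nat.eq_zero_or_pos k with hk0 | hk0
      · -- base case : first layer
        subst hk0
        have h2j : 2 * j < d := by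
          have := half_lt d 0 j hjlt
          rwa [nval_zero d hd] at this
        simp only [DNN.hidden, id_eq]
        rw [affine_eq, affine_eq]
        simp only [maxw, maxb, e1, e2, e3, e4, if_pos rfl, ldim_zero, one_ne_zero, if_false,
          if_true]
        simp only [Vval]
        rw [nval_zero d hd]
        by_cases hc : 2 * j + 1 < d
        · simp only [if_pos hc]
          simp only [add_mul, Finset.sum_add_distrib]
          rw [sum_ite_mul h2j (1:ℝ), sum_ite_mul hc (-1:ℝ), sum_ite_mul hc (1:ℝ)]
          erw [dif_pos (show 2 * j < ldim d 0 from h2j), dif_pos (show 2 * j + 1 < ldim d 0 from hc)]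
          erw [id_eq]
          have hb : (0:ℝ) ≤ x ⟨2 * j + 1, hc⟩ - a := by linarith [hx ⟨2 * j + 1, hc⟩]
          rw [Xext, Xext, dif_pos h2j, dif_pos hc]
          have h5 : max (1 * x ⟨2 * j + 1, hc⟩ + -a) 0 = x ⟨2 * j + 1, hc⟩ - a := by
            rw [max_eq_left (by linarith)]; ring
          have h6 : max (1 * x ⟨2 * j, h2j⟩ + -1 * x ⟨2 * j + 1, hc⟩ + 0) 0
              = max (x ⟨2 * j, h2j⟩ - x ⟨2 * j + 1, hc⟩) 0 := by ring_nf
          erw [h5, h6]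
          exact maxkey2 _ _ _
        · simp only [if_neg hc]
          simp only [add_zero, zero_mul, Finset.sum_const_zero]
          rw [sum_ite_mul h2j (1:ℝ)]
          erw [dif_pos (show 2 * j < ldim d 0 from h2j)]
          erw [id_eq]
          rw [Xext, dif_pos h2j]
          have hb : (0:ℝ) ≤ x ⟨2 * j, h2j⟩ - a := by linarith [hx ⟨2 * j, h2j⟩]
          have h5 : max (1 * x ⟨2 * j, h2j⟩ + -a) 0 = x ⟨2 * j, h2j⟩ - a := by
            rw [max_eq_left (by linarith)]; ring
          erw [h5]
          simp
      · -- inductive step : middle layer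
        obtain ⟨ihnn, ihpair⟩ := ih hk0 (by omega)
        have hℓk : (maxDNN d a).ℓ k = 2 * nval d k := ldim_mid d k hk0 (by omega)
        have h2j : 2 * j < nval d k := half_lt d k j hjlt
        simp only [DNN.hidden]
        rw [affine_eq, affine_eq]
        simp only [maxw, maxb, e1, e2, e3, e4, if_neg (by omega : ¬ k = 0),
          if_pos (by omega : k < d), one_ne_zero, if_false, if_true]
        set u := DNN.hidden (maxDNN d a) k x with hu
        have hUnn : ∀ t, (0:ℝ) ≤ (if h : t < ldim d k then u ⟨t, h⟩ else 0) := by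
          intro t
          split
          · exact ihnn _
          · exact le_rfl
        have ha1 : 2 * (2 * j) < ldim d k := by
          show 2 * (2 * j) < (maxDNN d a).ℓ k; omega
        have ha2 : 2 * (2 * j) + 1 < ldim d k := by
          show 2 * (2 * j) + 1 < (maxDNN d a).ℓ k; omega
        have hV1 : (if h : 2 * (2 * j) < ldim d k then u ⟨2 * (2 * j), h⟩ else 0)
            + (if h : 2 * (2 * j) + 1 < ldim d k then u ⟨2 * (2 * j) + 1, h⟩ else 0)
            = Vval d a x k (2 * j) := by
          rw [dif_pos ha1, dif_pos ha2]
          exact ihpair (2 * j) ha2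
        simp only [Vval]
        by_cases hc : 2 * j + 1 < nval d k
        · have ha3 : 2 * (2 * j + 1) < ldim d k := by
            show 2 * (2 * j + 1) < (maxDNN d a).ℓ k; omega
          have ha4 : 2 * (2 * j + 1) + 1 < ldim d k := by
            show 2 * (2 * j + 1) + 1 < (maxDNN d a).ℓ k; omega
          have hV2 : (if h : 2 * (2 * j + 1) < ldim d k then u ⟨2 * (2 * j + 1), h⟩ else 0)
              + (if h : 2 * (2 * j + 1) + 1 < ldim d k then u ⟨2 * (2 * j + 1) + 1, h⟩ else 0)
              = Vval d a x k (2 * j + 1) := by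
            rw [dif_pos ha3, dif_pos ha4]
            exact ihpair (2 * j + 1) ha4
          simp only [if_pos hc]
          simp only [add_mul, Finset.sum_add_distrib]
          rw [sum_ite_mul ha1 (1:ℝ), sum_ite_mul ha2 (1:ℝ), sum_ite_mul ha3 (-1:ℝ),
            sum_ite_mul ha4 (-1:ℝ), sum_ite_mul ha3 (1:ℝ), sum_ite_mul ha4 (1:ℝ)]
          set U1 := (if h : 2 * (2 * j) < ldim d k then u ⟨2 * (2 * j), h⟩ else 0)
          set U2 := (if h : 2 * (2 * j) + 1 < ldim d k then u ⟨2 * (2 * j) + 1, h⟩ else 0)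
          set U3 := (if h : 2 * (2 * j + 1) < ldim d k then u ⟨2 * (2 * j + 1), h⟩ else 0)
          set U4 := (if h : 2 * (2 * j + 1) + 1 < ldim d k then u ⟨2 * (2 * j + 1) + 1, h⟩ else 0)
          have hB : (0:ℝ) ≤ U3 + U4 := add_nonneg (hUnn _) (hUnn _)
          have hg1 : max (1 * U1 + 1 * U2 + (-1 * U3 + -1 * U4) + 0) 0
              = max ((U1 + U2) - (U3 + U4)) 0 := by ring_nf
          have hg2 : max (1 * U3 + 1 * U4 + 0) 0 = U3 + U4 := by
            rw [max_eq_left (by linarith)]; ring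
          rw [hg1, hg2, maxkey, hV1, hV2]
        · simp only [if_neg hc]
          simp only [add_zero, zero_mul, Finset.sum_const_zero]
          simp only [add_mul, Finset.sum_add_distrib]
          rw [sum_ite_mul ha1 (1:ℝ), sum_ite_mul ha2 (1:ℝ)]
          set U1 := (if h : 2 * (2 * j) < ldim d k then u ⟨2 * (2 * j), h⟩ else 0)
          set U2 := (if h : 2 * (2 * j) + 1 < ldim d k then u ⟨2 * (2 * j) + 1, h⟩ else 0)
          have hA : (0:ℝ) ≤ U1 + U2 := add_nonneg (hUnn _) (hUnn _)
          have hg1 : max (1 * U1 + 1 * U2) 0 = U1 + U2 := by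
            rw [max_eq_left (by linarith)]; ring
          rw [hg1, hV1]
          simp

lemma realize_eq (d : ℕ) (hd : 0 < d) (a : ℝ) (x : Fin d → ℝ) (hx : ∀ i, a ≤ x i)
    (i : Fin ((maxDNN d a).ℓ ((maxDNN d a).L + 1))) :
    DNN.realize (maxDNN d a) x i = Vval d a x d 0 + a := by
  obtain ⟨-, ihpair⟩ := hidden_invariant d hd a x hx d (by omega) le_rfl
  have hℓd : (maxDNN d a).ℓ d = 2 * nval d d := ldim_mid d d (by omega) le_rfl
  have hnd : nval d d = 1 := nval_self d hd
  show DNN.affine (maxDNN d a) d (DNN.hidden (maxDNN d a) d x) i = _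
  rw [affine_eq d a d (DNN.hidden (maxDNN d a) d x) i]
  simp only [maxw, maxb, if_neg (by omega : ¬ d = 0), if_neg (lt_irrefl d)]
  have h0 : (0:ℕ) < ldim d d := by show (0:ℕ) < (maxDNN d a).ℓ d; omega
  have h1 : (1:ℕ) < ldim d d := by show (1:ℕ) < (maxDNN d a).ℓ d; omega
  simp only [add_mul, Finset.sum_add_distrib]
  rw [sum_ite_mul h0 (1:ℝ), sum_ite_mul h1 (1:ℝ)]
  have hp := ihpair 0 (by omega)
  norm_num at hp ⊢
  rw [dif_pos h0, dif_pos h1]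
  rw [← hp]

def blockF (d k j : ℕ) : Finset ℕ :=
  (Finset.range d).filter (fun t => 2 ^ k * j ≤ t ∧ t < 2 ^ k * (j + 1))

lemma blockF_ne (d k j : ℕ) (hd : 0 < d) (hj : j < nval d k) : (blockF d k j).Nonempty := by
  refine ⟨2 ^ k * j, ?_⟩
  simp only [blockF, Finset.mem_filter, Finset.mem_range]
  have h1 : j ≤ (d - 1) / 2 ^ k := by unfold nval at hj; omega
  have h2 : j * 2 ^ k ≤ d - 1 := (Nat.le_div_iff_mul_le (Nat.two_pow_pos k)).1 h1
  have h3 : 2 ^ k * (j + 1) = 2 ^ k * j + 2 ^ k := by ring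
  have h4 : 2 ^ k * j = j * 2 ^ k := mul_comm _ _
  have h5 := Nat.two_pow_pos k
  omega

lemma sup'_eqset {s t : Finset ℕ} (h : s = t) (hs : s.Nonempty) (f : ℕ → ℝ) :
    s.sup' hs f = t.sup' (h ▸ hs) f := by subst h; rfl

lemma Vval_sup (d : ℕ) (hd : 0 < d) (a : ℝ) (x : Fin d → ℝ) :
    ∀ k j, ∀ hj : j < nval d k,
      Vval d a x k j = (blockF d k j).sup' (blockF_ne d k j hd hj) (Xext d x) - a := by
  intro k
  induction k with
  | zero =>
    intro j hj
    have hjd : j < d := by rwa [nval_zero d hd] at hj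
    have hb : blockF d 0 j = {j} := by
      ext t
      simp only [blockF, Finset.mem_filter, Finset.mem_range, Finset.mem_singleton, pow_zero,
        one_mul]
      omega
    rw [sup'_eqset hb]
    simp [Vval]
  | succ k ih =>
    intro j hj
    have h2j : 2 * j < nval d k := half_lt d k j hj
    have hpow : 2 ^ (k + 1) = 2 ^ k * 2 := pow_succ 2 k
    by_cases hc : 2 * j + 1 < nval d k
    · have hu : blockF d (k + 1) j = blockF d k (2 * j) ∪ blockF d k (2 * j + 1) := by
        ext t
        simp only [blockF, Finset.mem_filter, Finset.mem_range, Finset.mem_union]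
        have e1 : 2 ^ (k + 1) * j = 2 ^ k * (2 * j) := by rw [hpow]; ring
        have e2 : 2 ^ (k + 1) * (j + 1) = 2 ^ k * (2 * j + 1 + 1) := by rw [hpow]; ring
        have e3 : 2 ^ k * (2 * j + 1) = 2 ^ k * (2 * j) + 2 ^ k := by ring
        have e4 : 2 ^ k * (2 * j + 1 + 1) = 2 ^ k * (2 * j + 1) + 2 ^ k := by ring
        omega
      rw [sup'_eqset hu]
      rw [Finset.sup'_union (blockF_ne d k (2 * j) hd h2j) (blockF_ne d k (2 * j + 1) hd hc)]
      show (if 2 * j + 1 < nval d k then _ else _) = _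
      rw [if_pos hc, ih _ h2j, ih _ hc]
      rw [max_sub_sub_right]
    · have hdle : d ≤ 2 ^ k * (2 * j + 1) := by
        have h1 := d_le_nval_mul d k hd
        have h2 : nval d k * 2 ^ k ≤ (2 * j + 1) * 2 ^ k :=
          Nat.mul_le_mul_right _ (by omega)
        have h3 : (2 * j + 1) * 2 ^ k = 2 ^ k * (2 * j + 1) := mul_comm _ _
        omega
      have hu : blockF d (k + 1) j = blockF d k (2 * j) := by
        ext t
        simp only [blockF, Finset.mem_filter, Finset.mem_range]
        have e1 : 2 ^ (k + 1) * j = 2 ^ k * (2 * j) := by rw [hpow]; ring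
        have e2 : 2 ^ (k + 1) * (j + 1) = 2 ^ k * (2 * j + 1) + 2 ^ k := by rw [hpow]; ring
        have e3 : 2 ^ k * (2 * j + 1) = 2 ^ k * (2 * j) + 2 ^ k := by ring
        omega
      rw [sup'_eqset hu]
      show (if 2 * j + 1 < nval d k then _ else _) = _
      rw [if_neg hc, ih _ h2j]

lemma sup_range_eq (d : ℕ) (hd : 0 < d) (x : Fin d → ℝ) (hne : (Finset.range d).Nonempty) :
    (Finset.range d).sup' hne (Xext d x) = ⨆ i, x i := by
  have : Nonempty (Fin d) := ⟨⟨0, hd⟩⟩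
  apply le_antisymm
  · apply Finset.sup'_le
    intro t ht
    have htd : t < d := Finset.mem_range.1 ht
    rw [Xext]
    rw [dif_pos htd]
    exact le_ciSup (Set.Finite.bddAbove (Set.finite_range x)) ⟨t, htd⟩
  · apply ciSup_le
    intro i
    have hx : Xext d x i.1 = x i := by simp [Xext]
    exact hx ▸ Finset.le_sup' (Xext d x) (Finset.mem_range.2 i.2)

lemma Vval_final (d : ℕ) (hd : 0 < d) (a : ℝ) (x : Fin d → ℝ) :
    Vval d a x d 0 = (⨆ i, x i) - a := by
  have hj : (0:ℕ) < nval d d := nval_pos d d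
  rw [Vval_sup d hd a x d 0 hj]
  have hb : blockF d d 0 = Finset.range d := by
    ext t
    simp only [blockF, Finset.mem_filter, Finset.mem_range]
    have h1 : d < 2 ^ d := Nat.lt_two_pow_self (n := d)
    have h2 : 2 ^ d * (0 + 1) = 2 ^ d := by ring
    omega
  rw [sup'_eqset hb, sup_range_eq d hd x]

lemma sum_div_two_pow : ∀ N m : ℕ, (∑ k ∈ Finset.range N, m / 2 ^ (k + 1)) ≤ m := by
  intro N
  induction N with
  | zero => intro m; simp
  | succ n ihN =>
    intro m
    rw [Finset.sum_range_succ']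
    have he : ∀ k ∈ Finset.range n, m / 2 ^ (k + 1 + 1) = (m / 2) / 2 ^ (k + 1) := by
      intro k _
      rw [Nat.div_div_eq_div_mul]
      congr 1
      rw [pow_succ]
      ring
    rw [Finset.sum_congr rfl he]
    have h1 := ihN (m / 2)
    have h2 : m / 2 ^ (0 + 1) = m / 2 := by norm_num
    omega

lemma sum_nval (d : ℕ) (e : ℕ) :
    (∑ k ∈ Finset.range e, nval d (k + 1)) ≤ d - 1 + e := by
  unfold nval
  rw [Finset.sum_add_distrib, Finset.sum_const, smul_eq_mul, mul_one, Finset.card_range]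
  have := sum_div_two_pow e (d - 1)
  omega

lemma params_le (d : ℕ) (hd : 0 < d) (a : ℝ) : (maxDNN d a).params ≤ 19 * d ^ 2 := by
  obtain ⟨e, rfl⟩ : ∃ e, d = e + 1 := ⟨d - 1, by omega⟩
  set d := e + 1 with hdd
  have hparams : (maxDNN d a).params
      = ∑ k ∈ Finset.range (d + 1), ldim d (k + 1) * (ldim d k + 1) := rfl
  rw [hparams]
  rw [Finset.sum_range_succ, Finset.sum_range_succ']
  have hlast : ldim d (d + 1) * (ldim d d + 1) = 3 := by
    rw [ldim_last, ldim_mid d d (by omega) le_rfl, nval_self d (by omega)]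
  have hfirst : ldim d 1 * (ldim d 0 + 1) ≤ 2 * d * (d + 1) := by
    rw [ldim_zero, ldim_mid d 1 le_rfl (by omega)]
    have := nval_le d 1 (by omega)
    nlinarith
  have hmid : (∑ k ∈ Finset.range e, ldim d (k + 1 + 1) * (ldim d (k + 1) + 1))
      ≤ 6 * d * (d - 1 + e) := by
    calc (∑ k ∈ Finset.range e, ldim d (k + 1 + 1) * (ldim d (k + 1) + 1))
        ≤ ∑ k ∈ Finset.range e, 6 * d * nval d (k + 1) := by
          apply Finset.sum_le_sum
          intro k hk
          have hke : k < e := Finset.mem_range.1 hk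
          rw [ldim_mid d (k + 1 + 1) (by omega) (by omega),
            ldim_mid d (k + 1) (by omega) (by omega)]
          have h1 : nval d (k + 1 + 1) ≤ d := nval_le d _ (by omega)
          have h2 : 1 ≤ nval d (k + 1) := nval_pos d _
          nlinarith
      _ = 6 * d * ∑ k ∈ Finset.range e, nval d (k + 1) := by
          rw [Finset.mul_sum]
      _ ≤ 6 * d * (d - 1 + e) := by
          have := sum_nval d e
          exact Nat.mul_le_mul_left _ this
  have hde : d - 1 = e := by omega
  rw [hlast]
  nlinarith [hfirst, hmid, hde]

lemma one_le_toReal (p : ℝ≥0∞) (hp : 1 ≤ p) (hp' : p ≠ ∞) : 1 ≤ p.toReal := by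
  have := ENNReal.toReal_mono hp' hp
  simpa using this

lemma rpow_inv_self {t : ℝ} (ht : 1 ≤ t) (c : ℝ) (hc : 0 ≤ c) : (c ^ t) ^ (1 / t) = c := by
  rw [← Real.rpow_mul hc, mul_one_div_cancel (by linarith : t ≠ 0), Real.rpow_one]

lemma lpNorm_one_dim (p : ℝ≥0∞) (hp : 1 ≤ p) (v : Fin 1 → ℝ) : lpNorm p v = |v 0| := by
  unfold lpNorm
  split_ifs with h
  · refine le_antisymm (ciSup_le fun i => by rw [Subsingleton.elim i 0])
      (le_ciSup (f := fun i : Fin 1 => |v i|)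
        (Set.Finite.bddAbove (Set.finite_range _)) 0)
  · rw [Fin.sum_univ_one]
    exact rpow_inv_self (one_le_toReal p hp h) _ (abs_nonneg _)

lemma abs_le_lpNorm (p : ℝ≥0∞) (hp : 1 ≤ p) {n : ℕ} (v : Fin n → ℝ) (i : Fin n) :
    |v i| ≤ lpNorm p v := by
  unfold lpNorm
  split_ifs with h
  · exact le_ciSup (f := fun i => |v i|) (Set.Finite.bddAbove (Set.finite_range _)) i
  · have ht : 1 ≤ p.toReal := one_le_toReal p hp h
    have h1 : |v i| ^ p.toReal ≤ ∑ j, |v j| ^ p.toReal :=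
      Finset.single_le_sum (fun j _ => Real.rpow_nonneg (abs_nonneg _) _) (Finset.mem_univ i)
    calc |v i| = (|v i| ^ p.toReal) ^ (1 / p.toReal) :=
          (rpow_inv_self ht _ (abs_nonneg _)).symm
      _ ≤ (∑ j, |v j| ^ p.toReal) ^ (1 / p.toReal) :=
          Real.rpow_le_rpow (Real.rpow_nonneg (abs_nonneg _) _) h1 (by positivity)

lemma lpNorm_sub_comm (p : ℝ≥0∞) {n : ℕ} (u v : Fin n → ℝ) :
    lpNorm p (u - v) = lpNorm p (v - u) := by
  unfold lpNorm
  split_ifs with h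
  · congr 1; funext i; rw [Pi.sub_apply, Pi.sub_apply, abs_sub_comm]
  · congr 1
    apply Finset.sum_congr rfl
    intro i _
    rw [Pi.sub_apply, Pi.sub_apply, abs_sub_comm]

end MaxApprox

/-- **Lemma 3.11**: the maximum function `m_d(x) = max{x_1, …, x_d}` on any hypercube
`Q = [a,b]^d` can be approximated with Lipschitz constant `1` at cost `≤ K d²`,
for every `ε ∈ [0,∞)`. -/
theorem max_approx :
    ∃ K : ℕ, 0 < K ∧
      ∀ d : ℕ, 0 < d → ∀ (a b : ℝ), a < b → ∀ ε : ℝ, 0 ≤ ε → ∀ p : ℝ≥0∞, 1 ≤ p →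
        Cost p (cube d a b) (fun x (_ : Fin 1) => ⨆ i, x i) 1 ε ≤
          ENNReal.ofReal ((K : ℝ) * (d : ℝ) ^ 2) := by
  classical
  refine ⟨19, by norm_num, ?_⟩
  intro d hd a b hab ε hε p hp
  have hm : (MaxApprox.maxDNN d a).ℓ 0 = d := rfl
  have hn : (MaxApprox.maxDNN d a).ℓ ((MaxApprox.maxDNN d a).L + 1) = 1 :=
    MaxApprox.ldim_last d
  set g : (Fin d → ℝ) → (Fin 1 → ℝ) :=
    fun x i => DNN.realize (MaxApprox.maxDNN d a) (fun j => x (Fin.cast hm j))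
      (Fin.cast hn.symm i) with hgdef
  have hreal : (MaxApprox.maxDNN d a).Realizes g := ⟨hm, hn, fun x i => rfl⟩
  have hne : Nonempty (Fin d) := ⟨⟨0, hd⟩⟩
  have hgval : ∀ x ∈ cube d a b, ∀ i : Fin 1, g x i = ⨆ t, x t := by
    intro x hx i
    have hxa : ∀ j : Fin d, a ≤ (fun j : Fin d => x (Fin.cast hm j)) j := by
      intro j
      exact hx.1 (Fin.cast hm j)
    show DNN.realize (MaxApprox.maxDNN d a) (fun j => x (Fin.cast hm j))
      (Fin.cast hn.symm i) = ⨆ t, x t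
    have hre := MaxApprox.realize_eq d hd a (fun j => x (Fin.cast hm j)) hxa
      (Fin.cast hn.symm i)
    have hxx : (fun j : Fin d => x (Fin.cast hm j)) = x := funext fun j => rfl
    have hgoal : MaxApprox.Vval d a (fun j : Fin d => x (Fin.cast hm j)) d 0 + a
        = ⨆ t, x t := by
      rw [MaxApprox.Vval_final d hd a, hxx]
      ring
    exact hre.trans hgoal
  have herr : ∀ x ∈ cube d a b,
      lpNorm p (g x - (fun x (_ : Fin 1) => ⨆ i, x i) x) ≤ ε := by
    intro x hx
    rw [MaxApprox.lpNorm_one_dim p hp]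
    have : (g x - (fun x (_ : Fin 1) => ⨆ i, x i) x) 0 = 0 := by
      rw [Pi.sub_apply, hgval x hx 0]
      simp
    rw [this, abs_zero]
    exact hε
  have key : ∀ u v : Fin d → ℝ, (⨆ t, u t) - (⨆ t, v t) ≤ lpNorm p (u - v) := by
    intro u v
    rw [sub_le_iff_le_add]
    apply ciSup_le
    intro i
    have h2 : |(u - v) i| ≤ lpNorm p (u - v) := MaxApprox.abs_le_lpNorm p hp _ i
    have h3 : v i ≤ ⨆ t, v t := le_ciSup (Set.Finite.bddAbove (Set.finite_range v)) i
    have h4 : u i - v i ≤ |(u - v) i| := by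
      rw [Pi.sub_apply]
      exact le_abs_self _
    linarith
  have hlip : ∀ x ∈ cube d a b, ∀ y ∈ cube d a b,
      lpNorm p (g x - g y) ≤ 1 * lpNorm p (x - y) := by
    intro x hx y hy
    rw [MaxApprox.lpNorm_one_dim p hp, one_mul, Pi.sub_apply, hgval x hx 0, hgval y hy 0]
    rw [abs_sub_le_iff]
    constructor
    · exact key x y
    · rw [MaxApprox.lpNorm_sub_comm]
      exact key y x
  refine le_trans (sInf_le ⟨MaxApprox.maxDNN d a, g, hreal, rfl, herr, hlip⟩) ?_
  have h1 : (MaxApprox.maxDNN d a).params ≤ 19 * d ^ 2 := MaxApprox.params_le d hd a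
  calc ((MaxApprox.maxDNN d a).params : ℝ≥0∞) ≤ ((19 * d ^ 2 : ℕ) : ℝ≥0∞) := by
        exact_mod_cast h1
    _ = ENNReal.ofReal ((19 * d ^ 2 : ℕ) : ℝ) := (ENNReal.ofReal_natCast _).symm
    _ = ENNReal.ofReal (((19 : ℕ) : ℝ) * (d : ℝ) ^ 2) := by
        congr 1
        push_cast
        ring


end
end
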